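/- arXiv:2008.04593 — 3 statements merged into one kernel-verified Lean document; each statement's English description precedes it below -/
import Mathlib

section
/- For every monotone gridding matrix M, the refinement M^{×2} admits a consistent orientation. -/
namespace PPM

noncomputable section

/-- Intervalicity: minimum number of pairwise disjoint integer intervals covering `A`. -/
def intervalicity {n : ℕ} (A : Finset (Fin n)) : ℕ :=
  sInf {m | ∃ F : Finset (Finset (Fin n)), F.card = m ∧
    (∀ I ∈ F, ∃ a b : Fin n, I = Finset.Icc a b) ∧
    (F : Set (Finset (Fin n))).PairwiseDisjoint id ∧
    F.sup id = A}

/-- Grid-complexity of a point set. -/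
def gridComplexity {n : ℕ} (S : Finset (Fin n × Fin n)) : ℕ :=
  max (intervalicity (S.image Prod.fst)) (intervalicity (S.image Prod.snd))

/-- The diagram of a permutation. -/
def diagram {n : ℕ} (π : Equiv.Perm (Fin n)) : Finset (Fin n × Fin n) :=
  Finset.univ.image (fun i => (i, π i))

/-- Rooted binary trees with labeled leaves. -/
inductive GTree (α : Type) where
  | leaf : α → GTree α
  | node : GTree α → GTree α → GTree α

namespace GTree
variable {α : Type}

def leafList : GTree α → List α
  | leaf a => [a]
  | node l r => l.leafList ++ r.leafList

def subtrees : GTree α → List (GTree α)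
  | leaf a => [leaf a]
  | node l r => node l r :: (l.subtrees ++ r.subtrees)

def IsCaterpillar : GTree α → Prop
  | leaf _ => True
  | node l r => ((∃ a, l = leaf a) ∨ (∃ a, r = leaf a)) ∧ IsCaterpillar l ∧ IsCaterpillar r

def leafDepth [DecidableEq α] : GTree α → α → ℕ
  | leaf _, _ => 0
  | node l r, a => if a ∈ l.leafList then l.leafDepth a + 1 else r.leafDepth a + 1

end GTree

/-- Grid-width of a grid tree. -/
def treeGW {n : ℕ} (T : GTree (Fin n × Fin n)) : ℕ :=
  (T.subtrees.map (fun t => gridComplexity t.leafList.toFinset)).foldr max 0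

/-- `T` is a grid tree of `π`: its leaves are labeled bijectively by the points of `π`. -/
def IsGridTree {n : ℕ} (π : Equiv.Perm (Fin n)) (T : GTree (Fin n × Fin n)) : Prop :=
  T.leafList.Nodup ∧ T.leafList.toFinset = diagram π

/-- Grid-width of a permutation. -/
def gw {n : ℕ} (π : Equiv.Perm (Fin n)) : ℕ :=
  sInf {w | ∃ T, IsGridTree π T ∧ treeGW T = w}

/-- Path-width of a permutation: minimum over caterpillar grid trees. -/
def pw {n : ℕ} (π : Equiv.Perm (Fin n)) : ℕ :=
  sInf {w | ∃ T, IsGridTree π T ∧ T.IsCaterpillar ∧ treeGW T = w}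

/-- The `i`-th prefix point set of `π` in `σ`-ordering. -/
def prefixSet {n : ℕ} (π σ : Equiv.Perm (Fin n)) (i : Fin n) : Finset (Fin n × Fin n) :=
  (Finset.univ.filter (fun j => j ≤ i)).image (fun j => (σ j, π (σ j)))

/-- Path-width of `π` in `σ`-ordering. -/
def pwOrd {n : ℕ} (π σ : Equiv.Perm (Fin n)) : ℕ :=
  Finset.univ.sup (fun i => gridComplexity (prefixSet π σ i))

/-- Horizontal path-width: `σ` is the identity (left-to-right order). -/
def hpw {n : ℕ} (π : Equiv.Perm (Fin n)) : ℕ := pwOrd π 1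

/-- Vertical path-width: `σ = π⁻¹` (bottom-to-top order). -/
def vpw {n : ℕ} (π : Equiv.Perm (Fin n)) : ℕ := pwOrd π π⁻¹

/-- Pattern containment: `τ` contains `π`. -/
def Contains {n k : ℕ} (τ : Equiv.Perm (Fin n)) (π : Equiv.Perm (Fin k)) : Prop :=
  ∃ f : Fin k → Fin n, StrictMono f ∧ ∀ i j, π i < π j ↔ τ (f i) < τ (f j)

/-- A permutation class, given by its members of each length. -/
abbrev PermClass := ∀ n : ℕ, Set (Equiv.Perm (Fin n))

/-- Closure under pattern containment. -/
def IsPermClass (C : PermClass) : Prop :=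
  ∀ {n k : ℕ} (τ : Equiv.Perm (Fin n)) (π : Equiv.Perm (Fin k)),
    τ ∈ C n → Contains τ π → π ∈ C k

/-- `π` is griddable by the monotone gridding matrix `M`
(`some true` = Inc, `some false` = Dec, `none` = empty);
columns are the first index, rows the second. -/
def MonGriddable {n k l : ℕ} (M : Fin k → Fin l → Option Bool)
    (π : Equiv.Perm (Fin n)) : Prop :=
  ∃ (c : Fin n → Fin k) (r : Fin n → Fin l), Monotone c ∧ Monotone r ∧
    (∀ i : Fin n, (M (c i) (r (π i))).isSome) ∧
    (∀ i j : Fin n, i < j → c i = c j → r (π i) = r (π j) →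
      ∀ b, M (c i) (r (π i)) = some b → (if b then π i < π j else π j < π i))

/-- Adjacency of cells in the cell graph of a monotone gridding matrix:
both cells nonempty, sharing a row or a column, with only empty cells in between. -/
def MonCellAdj {k l : ℕ} (M : Fin k → Fin l → Option Bool)
    (p q : Fin k × Fin l) : Prop :=
  (M p.1 p.2).isSome ∧ (M q.1 q.2).isSome ∧
  ((p.1 = q.1 ∧ p.2 ≠ q.2 ∧ ∀ j : Fin l,
      ((p.2 < j ∧ j < q.2) ∨ (q.2 < j ∧ j < p.2)) → M p.1 j = Option.none) ∨
   (p.2 = q.2 ∧ p.1 ≠ q.1 ∧ ∀ i : Fin k,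
      ((p.1 < i ∧ i < q.1) ∨ (q.1 < i ∧ i < p.1)) → M i p.2 = Option.none))

/-- The cell graph of a monotone gridding matrix. -/
def monCellGraph {k l : ℕ} (M : Fin k → Fin l → Option Bool) :
    SimpleGraph (Fin k × Fin l) :=
  SimpleGraph.fromRel (MonCellAdj M)

/-- A consistent orientation of a monotone gridding matrix, signs coded by `Bool`. -/
def ConsistentOrientation {k l : ℕ} (M : Fin k → Fin l → Option Bool)
    (c : Fin k → Bool) (r : Fin l → Bool) : Prop :=
  ∀ i j, (M i j = some true → c i = r j) ∧ (M i j = some false → c i ≠ r j)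

/-- The refinement `M^{×q}` of a monotone gridding matrix. -/
def refine {k l : ℕ} (M : Fin k → Fin l → Option Bool) (q : ℕ) :
    Fin (q * k) → Fin (q * l) → Option Bool :=
  fun i j =>
    match M ⟨i.val / q, Nat.div_lt_of_lt_mul i.isLt⟩
            ⟨j.val / q, Nat.div_lt_of_lt_mul j.isLt⟩ with
    | some true => if i.val % q = j.val % q then some true else none
    | some false => if i.val % q + j.val % q = q - 1 then some false else none
    | none => none

/-- The restriction of `π` to the position set `P` is order-isomorphic to a member of `C`. -/
def CellPattern {n : ℕ} (π : Equiv.Perm (Fin n)) (P : Finset (Fin n))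
    (C : PermClass) : Prop :=
  ∃ m : ℕ, ∃ σ ∈ C m, ∃ f : Fin m → Fin n, StrictMono f ∧
    Finset.univ.image f = P ∧ ∀ i j, σ i < σ j ↔ π (f i) < π (f j)

/-- `π` is griddable by a gridding matrix with permutation-class entries. -/
def GenGriddable {n k l : ℕ} (M : Fin k → Fin l → PermClass)
    (π : Equiv.Perm (Fin n)) : Prop :=
  ∃ (c : Fin n → Fin k) (r : Fin n → Fin l), Monotone c ∧ Monotone r ∧
    ∀ (a : Fin k) (b : Fin l),
      (Finset.univ.filter (fun i => c i = a ∧ r (π i) = b) = ∅) ∨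
      CellPattern π (Finset.univ.filter (fun i => c i = a ∧ r (π i) = b)) (M a b)

/-- A class containing some nonempty permutation. -/
def ClassNonempty (C : PermClass) : Prop := ∃ n, 0 < n ∧ (C n).Nonempty

/-- An infinite class: members of arbitrarily large lengths. -/
def ClassInfinite (C : PermClass) : Prop := ∀ m, ∃ n, m ≤ n ∧ (C n).Nonempty

/-- Cell adjacency for a general gridding matrix. -/
def GenCellAdj {k l : ℕ} (M : Fin k → Fin l → PermClass)
    (p q : Fin k × Fin l) : Prop :=
  ClassNonempty (M p.1 p.2) ∧ ClassNonempty (M q.1 q.2) ∧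
  ((p.1 = q.1 ∧ p.2 ≠ q.2 ∧ ∀ j : Fin l,
      ((p.2 < j ∧ j < q.2) ∨ (q.2 < j ∧ j < p.2)) → ¬ ClassNonempty (M p.1 j)) ∨
   (p.2 = q.2 ∧ p.1 ≠ q.1 ∧ ∀ i : Fin k,
      ((p.1 < i ∧ i < q.1) ∨ (q.1 < i ∧ i < p.1)) → ¬ ClassNonempty (M i p.2)))

/-- The cell graph of a general gridding matrix. -/
def genCellGraph {k l : ℕ} (M : Fin k → Fin l → PermClass) :
    SimpleGraph (Fin k × Fin l) :=
  SimpleGraph.fromRel (GenCellAdj M)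

/-- Unbounded horizontal path-width of a class. -/
def UnboundedHPW (C : PermClass) : Prop := ∀ K, ∃ n, ∃ π ∈ C n, K < hpw π

/-- Unbounded vertical path-width of a class. -/
def UnboundedVPW (C : PermClass) : Prop := ∀ K, ∃ n, ∃ π ∈ C n, K < vpw π

/-- `(p, q)` is a bumper. -/
def Bumper {k l : ℕ} (M : Fin k → Fin l → PermClass) (p q : Fin k × Fin l) : Prop :=
  (UnboundedHPW (M q.1 q.2) ∧ p.1 = q.1) ∨ (UnboundedVPW (M q.1 q.2) ∧ p.2 = q.2)

/-- The cell graph of `M` contains a bumper-ended path. -/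
def HasBumperEndedPath {k l : ℕ} (M : Fin k → Fin l → PermClass) : Prop :=
  ∃ (L : List (Fin k × Fin l)) (h : 2 ≤ L.length),
    List.Chain' (genCellGraph M).Adj L ∧ L.Nodup ∧
    Bumper M (L.get ⟨1, by omega⟩) (L.get ⟨0, by omega⟩) ∧
    Bumper M (L.get ⟨L.length - 2, by omega⟩) (L.get ⟨L.length - 1, by omega⟩)

/-- Horizontal alternation: all even entries (1-based values) precede all odd entries. -/
def IsHorizAlt {n : ℕ} (π : Equiv.Perm (Fin n)) : Prop :=
  ∀ i j : Fin n, i < j → ¬(Odd ((π i).val + 1) ∧ Even ((π j).val + 1))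

/-- `σ` is monotone on the positions satisfying `P`. -/
def MonOn {n : ℕ} (σ : Equiv.Perm (Fin n)) (P : Fin n → Prop) : Prop :=
  (∀ i j, i < j → P i → P j → σ i < σ j) ∨ (∀ i j, i < j → P i → P j → σ j < σ i)

/-- Monotone horizontal alternation. -/
def IsMonHorizAlt {n : ℕ} (σ : Equiv.Perm (Fin n)) : Prop :=
  IsHorizAlt σ ∧ MonOn σ (fun i => Odd ((σ i).val + 1)) ∧
    MonOn σ (fun i => Even ((σ i).val + 1))

/-- The 1×2 horizontal monotone juxtaposition matrix. -/
def juxH (b₁ b₂ : Bool) : Fin 2 → Fin 1 → Option Bool :=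
  fun i _ => some (if i = 0 then b₁ else b₂)

/-- No three consecutive cells of the list share a row or a column. -/
def ProperTurning {k l : ℕ} (L : List (Fin k × Fin l)) : Prop :=
  ∀ a b c : Fin k × Fin l, [a, b, c] <:+: L →
    ¬(a.1 = b.1 ∧ b.1 = c.1) ∧ ¬(a.2 = b.2 ∧ b.2 = c.2)

/-- The class of increasing (`true`) or decreasing (`false`) permutations. -/
def monClass (b : Bool) : PermClass :=
  fun n => {π | ∀ i j : Fin n, i < j → (if b then π i < π j else π j < π i)}

end

end PPM

open PPM

/-- the refinement `M^{×2}` of any monotone gridding matrix admits a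
consistent orientation. -/
theorem refine_two_consistentOrientation {k l : ℕ} (M : Fin k → Fin l → Option Bool) :
    ∃ (c : Fin (2 * k) → Bool) (r : Fin (2 * l) → Bool),
      ConsistentOrientation (refine M 2) c r := by
  refine ⟨fun i => decide (i.val % 2 = 0), fun j => decide (j.val % 2 = 0), fun i j => ?_⟩
  constructor <;> intro h <;> unfold PPM.refine at h <;> revert h <;>
    rcases hM : M ⟨i.val / 2, Nat.div_lt_of_lt_mul i.isLt⟩
      ⟨j.val / 2, Nat.div_lt_of_lt_mul j.isLt⟩ with _ | _ | _ <;>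
    simp only [hM] <;> (try split_ifs with hij) <;> intro h <;>
    first
      | (simp only [decide_eq_decide, ne_eq, decide_eq_decide]; omega)
      | simp at h
end

section
/- If M is a k × ℓ monotone gridding matrix admitting a consistent orientation and whose cell graph G_M is a forest, then every permutation in Grid(M) has path-width at most max(k, ℓ). -/
open PPM

open SimpleGraph

namespace PPMaux


lemma exists_deg_le_one {V : Type*} [Fintype V] [DecidableEq V] {G : SimpleGraph V}
    (hG : G.IsAcyclic) (C : Finset V) (hne : C.Nonempty)
    (hcl : ∀ u v, G.Adj u v → u ∈ C) :
    ∃ v ∈ C, ∀ a b, G.Adj v a → G.Adj v b → a = b := by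
  classical
  by_contra hcon
  push_neg at hcon
  set P : Set ℕ := {m | ∃ (u v : V) (p : G.Walk u v), p.IsPath ∧ u ∈ C ∧ p.length = m} with hP
  have hPne : P.Nonempty := by
    obtain ⟨v₀, hv₀⟩ := hne
    exact ⟨0, v₀, v₀, Walk.nil, Walk.IsPath.nil, hv₀, rfl⟩
  have hbdd : BddAbove P := by
    refine ⟨Fintype.card V, ?_⟩
    rintro m ⟨u, v, p, hp, -, rfl⟩
    exact le_of_lt hp.length_lt
  obtain ⟨u, v, p, hp, huC, hlen⟩ := Nat.sSup_mem hPne hbdd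
  obtain ⟨a, b, hua, hub, hab⟩ := hcon u huC
  have hmax : ∀ (w : V) (h : G.Adj w u), w ∈ p.support := by
    intro w h
    by_contra hw
    have hq : (Walk.cons h p).IsPath := (Walk.cons_isPath_iff h p).mpr ⟨hp, hw⟩
    have : p.length + 1 ∈ P := ⟨w, v, Walk.cons h p, hq, hcl w u h, rfl⟩
    have := le_csSup hbdd this
    omega
  cases p with
  | nil =>
    have := hmax a hua.symm
    simp only [Walk.support_nil, List.mem_singleton] at this
    exact hua.ne this.symm
  | @cons _ s _ h q =>
    set w : V := if a = s then b else a with hw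
    have hws : w ≠ s := by
      by_cases hchk : a = s <;> simp [hw, hchk]
      · exact fun hbs => hab (hchk.trans hbs.symm)
    have huw : G.Adj u w := by
      by_cases hchk : a = s <;> simp [hw, hchk, hua, hub]
    have hwsup : w ∈ (Walk.cons h q).support := hmax w huw.symm
    set p' := (Walk.cons h q).takeUntil w hwsup with hp'
    have hp'path : p'.IsPath := hp.takeUntil hwsup
    have hedge : s(w, u) ∉ p'.edges := by
      intro hmem
      have hmem2 : s(w, u) ∈ (Walk.cons h q).edges :=
        Walk.edges_takeUntil_subset _ hwsup hmem
      rw [Walk.edges_cons] at hmem2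
      rcases List.mem_cons.mp hmem2 with heq | hmem3
      · rw [Sym2.eq_iff] at heq
        rcases heq with ⟨h1, h2⟩ | ⟨h1, h2⟩
        · exact huw.ne h1.symm
        · exact hws h1
      · have : u ∈ q.support := Walk.snd_mem_support_of_mem_edges q hmem3
        exact ((Walk.cons_isPath_iff h q).mp hp).2 this
    have hcyc : (Walk.cons huw.symm p').IsCycle :=
      (Walk.cons_isCycle_iff p' huw.symm).mpr ⟨hp'path, hedge⟩
    exact hG _ hcyc


variable {k l : ℕ}

/-- Cell graph on an explicit set `C` of cells. -/
def cellRel (C : Finset (Fin k × Fin l)) (p q : Fin k × Fin l) : Prop :=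
  p ∈ C ∧ q ∈ C ∧
  ((p.1 = q.1 ∧ ∀ x : Fin l, ((p.2 < x ∧ x < q.2) ∨ (q.2 < x ∧ x < p.2)) → (p.1, x) ∉ C) ∨
   (p.2 = q.2 ∧ ∀ x : Fin k, ((p.1 < x ∧ x < q.1) ∨ (q.1 < x ∧ x < p.1)) → (x, p.2) ∉ C))

def cellG (C : Finset (Fin k × Fin l)) : SimpleGraph (Fin k × Fin l) :=
  SimpleGraph.fromRel (cellRel C)

lemma acyclic_mono {V : Type*} {G G' : SimpleGraph V} (h : G ≤ G') (h' : G'.IsAcyclic) :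
    G.IsAcyclic := fun _ c hc => h' (c.mapLe h) (hc.mapLe h)

lemma adj_mem {C : Finset (Fin k × Fin l)} {p q : Fin k × Fin l}
    (h : (cellG C).Adj p q) : p ∈ C ∧ q ∈ C := by
  rw [cellG, fromRel_adj] at h
  rcases h.2 with h2 | h2
  · exact ⟨h2.1, h2.2.1⟩
  · exact ⟨h2.2.1, h2.1⟩

lemma nbr_col_below {C : Finset (Fin k × Fin l)} {X : Fin k × Fin l} (hX : X ∈ C)
    (h : ∃ Q ∈ C, Q.1 = X.1 ∧ Q.2 < X.2) :
    ∃ N, (cellG C).Adj X N ∧ N.1 = X.1 ∧ N.2 < X.2 := by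
  classical
  set F := C.filter (fun Q => Q.1 = X.1 ∧ Q.2 < X.2) with hF
  have hFne : F.Nonempty := by
    obtain ⟨Q, hQ, h1, h2⟩ := h
    exact ⟨Q, by simp [hF, hQ, h1, h2]⟩
  obtain ⟨N, hNF, hmax⟩ := Finset.exists_max_image F (fun Q => Q.2) hFne
  simp only [hF, Finset.mem_filter] at hNF
  refine ⟨N, ?_, hNF.2.1, hNF.2.2⟩
  rw [cellG, fromRel_adj]
  refine ⟨?_, Or.inl ⟨hX, hNF.1, Or.inl ⟨hNF.2.1.symm, ?_⟩⟩⟩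
  · intro hEq; rw [← hEq] at hNF; exact absurd hNF.2.2 (lt_irrefl _)
  · rintro x (⟨h1, h2⟩ | ⟨h1, h2⟩)
    · exact absurd (h1.trans (h2.trans hNF.2.2)) (lt_irrefl _)
    · intro hxC
      have : (X.1, x) ∈ F := by simp [hF, hxC, h2]
      have := hmax _ this
      simp only at this
      exact absurd (lt_of_le_of_lt this h1) (lt_irrefl _)

lemma nbr_col_above {C : Finset (Fin k × Fin l)} {X : Fin k × Fin l} (hX : X ∈ C)
    (h : ∃ Q ∈ C, Q.1 = X.1 ∧ X.2 < Q.2) :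
    ∃ N, (cellG C).Adj X N ∧ N.1 = X.1 ∧ X.2 < N.2 := by
  classical
  set F := C.filter (fun Q => Q.1 = X.1 ∧ X.2 < Q.2) with hF
  have hFne : F.Nonempty := by
    obtain ⟨Q, hQ, h1, h2⟩ := h
    exact ⟨Q, by simp [hF, hQ, h1, h2]⟩
  obtain ⟨N, hNF, hmin⟩ := Finset.exists_min_image F (fun Q => Q.2) hFne
  simp only [hF, Finset.mem_filter] at hNF
  refine ⟨N, ?_, hNF.2.1, hNF.2.2⟩
  rw [cellG, fromRel_adj]
  refine ⟨?_, Or.inl ⟨hX, hNF.1, Or.inl ⟨hNF.2.1.symm, ?_⟩⟩⟩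
  · intro hEq; rw [← hEq] at hNF; exact absurd hNF.2.2 (lt_irrefl _)
  · rintro x (⟨h1, h2⟩ | ⟨h1, h2⟩)
    · intro hxC
      have : (X.1, x) ∈ F := by simp [hF, hxC, h1]
      have := hmin _ this
      simp only at this
      exact absurd (lt_of_lt_of_le h2 this) (lt_irrefl _)
    · exact absurd ((hNF.2.2.trans h1).trans h2) (lt_irrefl _)

lemma nbr_row_left {C : Finset (Fin k × Fin l)} {X : Fin k × Fin l} (hX : X ∈ C)
    (h : ∃ Q ∈ C, Q.2 = X.2 ∧ Q.1 < X.1) :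
    ∃ N, (cellG C).Adj X N ∧ N.2 = X.2 ∧ N.1 < X.1 := by
  classical
  set F := C.filter (fun Q => Q.2 = X.2 ∧ Q.1 < X.1) with hF
  have hFne : F.Nonempty := by
    obtain ⟨Q, hQ, h1, h2⟩ := h
    exact ⟨Q, by simp [hF, hQ, h1, h2]⟩
  obtain ⟨N, hNF, hmax⟩ := Finset.exists_max_image F (fun Q => Q.1) hFne
  simp only [hF, Finset.mem_filter] at hNF
  refine ⟨N, ?_, hNF.2.1, hNF.2.2⟩
  rw [cellG, fromRel_adj]
  refine ⟨?_, Or.inl ⟨hX, hNF.1, Or.inr ⟨hNF.2.1.symm, ?_⟩⟩⟩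
  · intro hEq; rw [← hEq] at hNF; exact absurd hNF.2.2 (lt_irrefl _)
  · rintro x (⟨h1, h2⟩ | ⟨h1, h2⟩)
    · exact absurd (h1.trans (h2.trans hNF.2.2)) (lt_irrefl _)
    · intro hxC
      have : (x, X.2) ∈ F := by simp [hF, hxC, h2]
      have := hmax _ this
      simp only at this
      exact absurd (lt_of_le_of_lt this h1) (lt_irrefl _)

lemma nbr_row_right {C : Finset (Fin k × Fin l)} {X : Fin k × Fin l} (hX : X ∈ C)
    (h : ∃ Q ∈ C, Q.2 = X.2 ∧ X.1 < Q.1) :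
    ∃ N, (cellG C).Adj X N ∧ N.2 = X.2 ∧ X.1 < N.1 := by
  classical
  set F := C.filter (fun Q => Q.2 = X.2 ∧ X.1 < Q.1) with hF
  have hFne : F.Nonempty := by
    obtain ⟨Q, hQ, h1, h2⟩ := h
    exact ⟨Q, by simp [hF, hQ, h1, h2]⟩
  obtain ⟨N, hNF, hmin⟩ := Finset.exists_min_image F (fun Q => Q.1) hFne
  simp only [hF, Finset.mem_filter] at hNF
  refine ⟨N, ?_, hNF.2.1, hNF.2.2⟩
  rw [cellG, fromRel_adj]
  refine ⟨?_, Or.inl ⟨hX, hNF.1, Or.inr ⟨hNF.2.1.symm, ?_⟩⟩⟩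
  · intro hEq; rw [← hEq] at hNF; exact absurd hNF.2.2 (lt_irrefl _)
  · rintro x (⟨h1, h2⟩ | ⟨h1, h2⟩)
    · intro hxC
      have : (x, X.2) ∈ F := by simp [hF, hxC, h1]
      have := hmin _ this
      simp only at this
      exact absurd (lt_of_lt_of_le h2 this) (lt_irrefl _)
    · exact absurd ((hNF.2.2.trans h1).trans h2) (lt_irrefl _)

/-- peelable in column direction: alone in its column, and not flanked on both sides in row -/
def Pcol (C : Finset (Fin k × Fin l)) (X : Fin k × Fin l) : Prop :=
  (∀ Q ∈ C, Q.1 = X.1 → Q = X) ∧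
  ¬((∃ Q ∈ C, Q.2 = X.2 ∧ Q.1 < X.1) ∧ (∃ Q ∈ C, Q.2 = X.2 ∧ X.1 < Q.1))

def Prow (C : Finset (Fin k × Fin l)) (X : Fin k × Fin l) : Prop :=
  (∀ Q ∈ C, Q.2 = X.2 → Q = X) ∧
  ¬((∃ Q ∈ C, Q.1 = X.1 ∧ Q.2 < X.2) ∧ (∃ Q ∈ C, Q.1 = X.1 ∧ X.2 < Q.2))

lemma exists_peelable {C : Finset (Fin k × Fin l)} (hne : C.Nonempty)
    (hac : (cellG C).IsAcyclic) : ∃ X ∈ C, Pcol C X ∨ Prow C X := by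
  classical
  obtain ⟨X, hXC, huniq⟩ := exists_deg_le_one hac C hne (fun u v h => (adj_mem h).1)
  refine ⟨X, hXC, ?_⟩
  by_contra hcon
  push_neg at hcon
  obtain ⟨hnc, hnr⟩ := hcon
  -- first: rule out flanking in row
  have hrow2 : ¬((∃ Q ∈ C, Q.2 = X.2 ∧ Q.1 < X.1) ∧ (∃ Q ∈ C, Q.2 = X.2 ∧ X.1 < Q.1)) := by
    rintro ⟨h1, h2⟩
    obtain ⟨N1, hadj1, -, hlt1⟩ := nbr_row_left hXC h1
    obtain ⟨N2, hadj2, -, hlt2⟩ := nbr_row_right hXC h2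
    have : N1 = N2 := huniq _ _ hadj1 hadj2
    rw [this] at hlt1
    exact absurd (hlt1.trans hlt2) (lt_irrefl _)
  have hcol2 : ¬((∃ Q ∈ C, Q.1 = X.1 ∧ Q.2 < X.2) ∧ (∃ Q ∈ C, Q.1 = X.1 ∧ X.2 < Q.2)) := by
    rintro ⟨h1, h2⟩
    obtain ⟨N1, hadj1, -, hlt1⟩ := nbr_col_below hXC h1
    obtain ⟨N2, hadj2, -, hlt2⟩ := nbr_col_above hXC h2
    have : N1 = N2 := huniq _ _ hadj1 hadj2
    rw [this] at hlt1
    exact absurd (hlt1.trans hlt2) (lt_irrefl _)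
  -- from ¬Pcol: some other cell in the column
  have hocol : ∃ Q ∈ C, Q.1 = X.1 ∧ Q ≠ X := by
    have h : ¬(∀ Q ∈ C, Q.1 = X.1 → Q = X) := by intro h; exact hnc ⟨h, hrow2⟩
    push_neg at h
    obtain ⟨Q, hQ, h1, h2⟩ := h
    exact ⟨Q, hQ, h1, h2⟩
  have horow : ∃ Q ∈ C, Q.2 = X.2 ∧ Q ≠ X := by
    have : ¬(∀ Q ∈ C, Q.2 = X.2 → Q = X) := by intro h; exact hnr ⟨h, hcol2⟩
    push_neg at this
    obtain ⟨Q, hQ, h1, h2⟩ := this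
    exact ⟨Q, hQ, h1, h2⟩
  -- produce a column neighbor and a row neighbor
  obtain ⟨Qc, hQc, hc1, hc2⟩ := hocol
  have hc3 : Qc.2 ≠ X.2 := by
    intro h; exact hc2 (Prod.ext hc1 h)
  have hNcol : ∃ N, (cellG C).Adj X N ∧ N.1 = X.1 ∧ N.2 ≠ X.2 := by
    rcases lt_or_gt_of_ne hc3 with h | h
    · obtain ⟨N, hadj, h1, h2⟩ := nbr_col_below hXC ⟨Qc, hQc, hc1, h⟩
      exact ⟨N, hadj, h1, ne_of_lt h2⟩
    · obtain ⟨N, hadj, h1, h2⟩ := nbr_col_above hXC ⟨Qc, hQc, hc1, h⟩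
      exact ⟨N, hadj, h1, (ne_of_lt h2).symm⟩
  obtain ⟨Qr, hQr, hr1, hr2⟩ := horow
  have hr3 : Qr.1 ≠ X.1 := by
    intro h; exact hr2 (Prod.ext h hr1)
  have hNrow : ∃ N, (cellG C).Adj X N ∧ N.2 = X.2 ∧ N.1 ≠ X.1 := by
    rcases lt_or_gt_of_ne hr3 with h | h
    · obtain ⟨N, hadj, h1, h2⟩ := nbr_row_left hXC ⟨Qr, hQr, hr1, h⟩
      exact ⟨N, hadj, h1, ne_of_lt h2⟩
    · obtain ⟨N, hadj, h1, h2⟩ := nbr_row_right hXC ⟨Qr, hQr, hr1, h⟩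
      exact ⟨N, hadj, h1, (ne_of_lt h2).symm⟩
  obtain ⟨N1, hadj1, h11, h12⟩ := hNcol
  obtain ⟨N2, hadj2, h21, h22⟩ := hNrow
  have : N1 = N2 := huniq _ _ hadj1 hadj2
  rw [this] at h11
  exact h22 h11

lemma peel_subgraph_col {C : Finset (Fin k × Fin l)} {X : Fin k × Fin l}
    (hX : X ∈ C) (hpeel : Pcol C X) : cellG (C.erase X) ≤ cellG C := by
  intro p q hadj
  rw [cellG, fromRel_adj] at hadj ⊢
  refine ⟨hadj.1, ?_⟩
  have key : ∀ a b, cellRel (C.erase X) a b → cellRel C a b := by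
    rintro a b ⟨ha, hb, hrest⟩
    have haC := Finset.mem_of_mem_erase ha
    have hbC := Finset.mem_of_mem_erase hb
    have haX : a ≠ X := Finset.ne_of_mem_erase ha
    have hbX : b ≠ X := Finset.ne_of_mem_erase hb
    refine ⟨haC, hbC, ?_⟩
    rcases hrest with ⟨h1, h2⟩ | ⟨h1, h2⟩
    · refine Or.inl ⟨h1, ?_⟩
      intro x hx hmem
      by_cases hXx : (a.1, x) = X
      · -- then a is another cell in X's column
        have : a = X := hpeel.1 a haC (by rw [← hXx])
        exact haX this
      · exact h2 x hx (Finset.mem_erase.mpr ⟨hXx, hmem⟩)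
    · refine Or.inr ⟨h1, ?_⟩
      intro x hx hmem
      by_cases hXx : (x, a.2) = X
      · -- X is flanked on both sides in its row: a and b
        apply hpeel.2
        have hx2 : a.2 = X.2 := by rw [← hXx]
        rcases hx with ⟨hl, hr⟩ | ⟨hl, hr⟩
        · refine ⟨⟨a, haC, hx2, ?_⟩, ⟨b, hbC, h1 ▸ hx2, ?_⟩⟩
          · rw [← hXx]; exact hl
          · rw [← hXx]; exact hr
        · refine ⟨⟨b, hbC, h1 ▸ hx2, ?_⟩, ⟨a, haC, hx2, ?_⟩⟩
          · rw [← hXx]; exact hl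
          · rw [← hXx]; exact hr
      · exact h2 x hx (Finset.mem_erase.mpr ⟨hXx, hmem⟩)
  rcases hadj.2 with h | h
  · exact Or.inl (key _ _ h)
  · exact Or.inr (key _ _ h)

lemma peel_subgraph_row {C : Finset (Fin k × Fin l)} {X : Fin k × Fin l}
    (hX : X ∈ C) (hpeel : Prow C X) : cellG (C.erase X) ≤ cellG C := by
  intro p q hadj
  rw [cellG, fromRel_adj] at hadj ⊢
  refine ⟨hadj.1, ?_⟩
  have key : ∀ a b, cellRel (C.erase X) a b → cellRel C a b := by
    rintro a b ⟨ha, hb, hrest⟩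
    have haC := Finset.mem_of_mem_erase ha
    have hbC := Finset.mem_of_mem_erase hb
    have haX : a ≠ X := Finset.ne_of_mem_erase ha
    refine ⟨haC, hbC, ?_⟩
    rcases hrest with ⟨h1, h2⟩ | ⟨h1, h2⟩
    · refine Or.inl ⟨h1, ?_⟩
      intro x hx hmem
      by_cases hXx : (a.1, x) = X
      · apply hpeel.2
        have hx1 : a.1 = X.1 := by rw [← hXx]
        rcases hx with ⟨hl, hr⟩ | ⟨hl, hr⟩
        · refine ⟨⟨a, haC, hx1, ?_⟩, ⟨b, hbC, h1 ▸ hx1, ?_⟩⟩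
          · rw [← hXx]; exact hl
          · rw [← hXx]; exact hr
        · refine ⟨⟨b, hbC, h1 ▸ hx1, ?_⟩, ⟨a, haC, hx1, ?_⟩⟩
          · rw [← hXx]; exact hl
          · rw [← hXx]; exact hr
      · exact h2 x hx (Finset.mem_erase.mpr ⟨hXx, hmem⟩)
    · refine Or.inr ⟨h1, ?_⟩
      intro x hx hmem
      by_cases hXx : (x, a.2) = X
      · have : a = X := hpeel.1 a haC (by rw [← hXx])
        exact haX this
      · exact h2 x hx (Finset.mem_erase.mpr ⟨hXx, hmem⟩)
  rcases hadj.2 with h | h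
  · exact Or.inl (key _ _ h)
  · exact Or.inr (key _ _ h)

open PPM
/-- a nonempty order-convex finset of Fin n is an Icc -/
lemma convex_eq_Icc {n : ℕ} (B : Finset (Fin n)) (hne : B.Nonempty)
    (hconv : ∀ x ∈ B, ∀ z ∈ B, ∀ y, x ≤ y → y ≤ z → y ∈ B) :
    ∃ a b : Fin n, B = Finset.Icc a b := by
  refine ⟨B.min' hne, B.max' hne, ?_⟩
  ext y
  simp only [Finset.mem_Icc]
  constructor
  · exact fun hy => ⟨B.min'_le y hy, B.le_max' y hy⟩
  · rintro ⟨h1, h2⟩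
    exact hconv _ (B.min'_mem hne) _ (B.max'_mem hne) y h1 h2

/-- If fibers of a monotone map g cut A into convex pieces, intervalicity A ≤ k. -/
lemma intervalicity_le {n k : ℕ} (A : Finset (Fin n)) (g : Fin n → Fin k)
    (hA : ∀ x ∈ A, ∀ z ∈ A, ∀ y, x ≤ y → y ≤ z → g x = g z → y ∈ A ∧ g y = g x) :
    intervalicity A ≤ k := by
  classical
  set F : Finset (Finset (Fin n)) :=
    (Finset.univ.filter (fun a : Fin k => (A.filter (fun i => g i = a)).Nonempty)).image
      (fun a => A.filter (fun i => g i = a)) with hF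
  have hmem : ∀ I ∈ F, ∃ a : Fin k, I = A.filter (fun i => g i = a) ∧ I.Nonempty := by
    intro I hI
    simp only [hF, Finset.mem_image, Finset.mem_filter, Finset.mem_univ, true_and] at hI
    obtain ⟨a, ha, rfl⟩ := hI
    exact ⟨a, rfl, ha⟩
  have h1 : ∀ I ∈ F, ∃ a b : Fin n, I = Finset.Icc a b := by
    intro I hI
    obtain ⟨a, rfl, hne⟩ := hmem I hI
    refine convex_eq_Icc _ hne ?_
    intro x hx z hz y h1 h2
    simp only [Finset.mem_filter] at hx hz ⊢
    have := hA x hx.1 z hz.1 y h1 h2 (hx.2.trans hz.2.symm)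
    exact ⟨this.1, this.2.trans hx.2⟩
  have h2 : (F : Set (Finset (Fin n))).PairwiseDisjoint id := by
    intro I hI J hJ hIJ
    obtain ⟨a, rfl, -⟩ := hmem I hI
    obtain ⟨b, rfl, -⟩ := hmem J hJ
    have hab : a ≠ b := by rintro rfl; exact hIJ rfl
    simp only [Function.onFun, id]
    refine Finset.disjoint_left.mpr ?_
    intro x hx hx'
    simp only [Finset.mem_filter] at hx hx'
    exact hab (hx.2 ▸ hx'.2 ▸ rfl)
  have h3 : F.sup id = A := by
    apply le_antisymm
    · refine Finset.sup_le ?_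
      intro I hI
      obtain ⟨a, rfl, -⟩ := hmem I hI
      simp [Finset.filter_subset]
    · intro x hx
      have : A.filter (fun i => g i = g x) ∈ F := by
        simp only [hF, Finset.mem_image, Finset.mem_filter, Finset.mem_univ, true_and]
        exact ⟨g x, ⟨x, by simp [hx]⟩, rfl⟩
      exact Finset.le_sup (f := id) this (by simp [hx])
  have : intervalicity A ≤ F.card := Nat.sInf_le ⟨F, rfl, h1, h2, h3⟩
  refine this.trans ?_
  refine (Finset.card_image_le).trans ?_
  exact (Finset.card_filter_le _ _).trans (by simp)


lemma merge_order {n : ℕ} (Con : Fin n → Fin n → Prop) (S X Y : Finset (Fin n))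
    (hXS : X ⊆ S) (hY : Y ⊆ S \ X) (V : Fin n → ℚ) (t' : Fin n → ℚ)
    (h1 : ∀ i ∈ S \ X, ∀ j ∈ S \ X, Con i j → t' i < t' j)
    (h2 : ∀ p ∈ X, ∀ q ∈ X, Con p q → V p < V q)
    (h3 : ∀ p ∈ X, ∀ j ∈ S \ X, (Con p j → j ∈ Y ∧ V p < V j) ∧ (Con j p → j ∈ Y ∧ V j < V p))
    (h4 : ∀ j ∈ Y, ∀ j' ∈ Y, V j < V j' → t' j < t' j') :
    ∃ t : Fin n → ℚ, ∀ i ∈ S, ∀ j ∈ S, Con i j → t i < t j := by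
  classical
  set rk : Fin n → ℕ := fun j => ((S \ X).filter (fun s => t' s < t' j)).card with hrk
  have rkmono : ∀ i ∈ S \ X, ∀ j, t' i < t' j → rk i < rk j := by
    intro i hi j hij
    apply Finset.card_lt_card
    refine Finset.ssubset_iff_of_subset ?_ |>.mpr ?_
    · intro s hs
      simp only [Finset.mem_filter] at hs ⊢
      exact ⟨hs.1, hs.2.trans hij⟩
    · exact ⟨i, by simp [hi, hij], by simp⟩
  set fY : Fin n → Finset (Fin n) := fun p => Y.filter (fun j => V j < V p) with hfY
  set B : Fin n → ℚ := fun p =>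
    if h : (fY p).Nonempty then (fY p).sup' h (fun j => (rk j : ℚ)) else -1 with hB
  set xr : Fin n → ℕ := fun p => (X.filter (fun s => V s < V p)).card with hxr
  set f : Fin n → ℚ := fun p => (1 + xr p) / (n + 2) with hf
  have fpos : ∀ p, 0 < f p := by
    intro p; apply div_pos <;> positivity
  have flt : ∀ p, f p < 1 := by
    intro p
    rw [hf, div_lt_one (by positivity)]
    have h1 : xr p ≤ n := le_trans (Finset.card_le_card (Finset.filter_subset _ _))
      (le_trans (Finset.card_le_univ X) (by simp))
    have h2 : (xr p : ℚ) ≤ n := by exact_mod_cast h1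
    linarith
  have Bge : ∀ p, ∀ j ∈ fY p, (rk j : ℚ) ≤ B p := by
    intro p j hj
    rw [hB]
    simp only
    rw [dif_pos ⟨j, hj⟩]
    exact Finset.le_sup' (fun j => (rk j : ℚ)) hj
  have Bneg : ∀ p, -1 ≤ B p := by
    intro p
    rw [hB]; simp only
    split_ifs with h
    · obtain ⟨j, hj⟩ := h
      calc (-1 : ℚ) ≤ (rk j : ℚ) := by
            calc (-1:ℚ) ≤ 0 := by norm_num
              _ ≤ _ := by positivity
        _ ≤ _ := Finset.le_sup' (fun j => (rk j : ℚ)) hj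
    · exact le_refl _
  have Bmono : ∀ p q, fY p ⊆ fY q → B p ≤ B q := by
    intro p q hsub
    rw [hB]; simp only
    split_ifs with h h' h''
    · exact Finset.sup'_le _ _ fun j hj => Finset.le_sup' (fun j => (rk j : ℚ)) (hsub hj)
    · exact absurd (h.mono hsub) h'
    · obtain ⟨j, hj⟩ := h''
      calc (-1 : ℚ) ≤ (rk j : ℚ) := by
            calc (-1:ℚ) ≤ 0 := by norm_num
              _ ≤ _ := by positivity
        _ ≤ _ := Finset.le_sup' (fun j => (rk j : ℚ)) hj
    · exact le_refl _
  have Blt : ∀ p j, (∀ s ∈ fY p, rk s < rk j) → B p + 1 ≤ (rk j : ℚ) := by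
    intro p j hall
    rw [hB]; simp only
    split_ifs with h
    · rw [← le_sub_iff_add_le]
      refine Finset.sup'_le _ _ fun s hs => ?_
      have := hall s hs
      rw [le_sub_iff_add_le]
      exact_mod_cast Nat.add_one_le_iff.mpr this
    · have : (0:ℚ) ≤ rk j := by positivity
      linarith
  refine ⟨fun i => if i ∈ X then B i + f i else (rk i : ℚ), ?_⟩
  intro i hi j hj hCon
  by_cases hiX : i ∈ X <;> by_cases hjX : j ∈ X <;> simp only [hiX, hjX, if_pos, if_neg,
    if_true, if_false]
  · -- both in X
    have hV := h2 i hiX j hjX hCon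
    have hBij : B i ≤ B j := by
      apply Bmono
      intro s hs
      simp only [hfY, Finset.mem_filter] at hs ⊢
      exact ⟨hs.1, hs.2.trans hV⟩
    have hxrij : xr i < xr j := by
      apply Finset.card_lt_card
      refine Finset.ssubset_iff_of_subset ?_ |>.mpr ?_
      · intro s hs
        simp only [Finset.mem_filter] at hs ⊢
        exact ⟨hs.1, hs.2.trans hV⟩
      · exact ⟨i, by simp [hiX, hV], by simp⟩
    have : f i < f j := by
      rw [hf]
      simp only
      gcongr
    linarith
  · -- i ∈ X, j ∉ X
    have hjSX : j ∈ S \ X := Finset.mem_sdiff.mpr ⟨hj, hjX⟩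
    obtain ⟨hjY, hV⟩ := (h3 i hiX j hjSX).1 hCon
    have : B i + 1 ≤ (rk j : ℚ) := by
      apply Blt
      intro s hs
      simp only [hfY, Finset.mem_filter] at hs
      exact rkmono s (hY hs.1) j (h4 s hs.1 j hjY (hs.2.trans hV))
    have := flt i
    linarith
  · -- i ∉ X, j ∈ X
    have hiSX : i ∈ S \ X := Finset.mem_sdiff.mpr ⟨hi, hiX⟩
    obtain ⟨hiY, hV⟩ := (h3 j hjX i hiSX).2 hCon
    have : (rk i : ℚ) ≤ B j := Bge j i (by simp [hfY, hiY, hV])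
    have := fpos j
    linarith
  · -- both outside
    have hih : i ∈ S \ X := Finset.mem_sdiff.mpr ⟨hi, hiX⟩
    have hjh : j ∈ S \ X := Finset.mem_sdiff.mpr ⟨hj, hjX⟩
    exact_mod_cast rkmono i hih j (h1 i hih j hjh hCon)


def key (b : Bool) (x : ℕ) : ℚ := if b then (x : ℚ) else -(x : ℚ)

lemma key_lt {b : Bool} {x y : ℕ} : key b x < key b y ↔ (if b then x < y else y < x) := by
  cases b <;> simp [key]

lemma key_inj {b : Bool} {x y : ℕ} (h : key b x = key b y) : x = y := by
  cases b <;> simp [key] at h <;> exact_mod_cast h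

lemma key_lt_true {x y : ℕ} (h : x < y) : key true x < key true y := by
  simp only [key, if_true]
  exact_mod_cast h

lemma key_lt_false {x y : ℕ} (h : y < x) : key false x < key false y := by
  simp only [key, Bool.false_eq_true, if_false, neg_lt_neg_iff]
  exact_mod_cast h

variable {k l n : ℕ}

/-- The precedence constraints. -/
def ConR (co : Fin k → Bool) (ro : Fin l → Bool) (π : Equiv.Perm (Fin n))
    (cg : Fin n → Fin k) (rg : Fin n → Fin l) (i j : Fin n) : Prop :=
  (cg i = cg j ∧ key (co (cg i)) i.val < key (co (cg j)) j.val) ∨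
  (rg (π i) = rg (π j) ∧ key (ro (rg (π i))) (π i).val < key (ro (rg (π j))) (π j).val)

section CC
variable (M : Fin k → Fin l → Option Bool) (co : Fin k → Bool) (ro : Fin l → Bool)
  (π : Equiv.Perm (Fin n)) (cg : Fin n → Fin k) (rg : Fin n → Fin l)

variable (hco : PPM.ConsistentOrientation M co ro)
  (hM : ∀ i, (M (cg i) (rg (π i))).isSome)
  (hdir : ∀ i j : Fin n, i < j → cg i = cg j → rg (π i) = rg (π j) →
    ∀ b, M (cg i) (rg (π i)) = some b → (if b then π i < π j else π j < π i))

include hco hM hdir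

lemma key_cc {i j : Fin n} (hc : cg i = cg j) (hr : rg (π i) = rg (π j))
    (h : key (co (cg i)) i.val < key (co (cg j)) j.val) :
    key (ro (rg (π i))) (π i).val < key (ro (rg (π j))) (π j).val := by
  obtain ⟨b, hb⟩ := Option.isSome_iff_exists.mp (hM i)
  have hb' : M (cg j) (rg (π j)) = some b := by rw [← hc, ← hr]; exact hb
  rw [hc] at h
  rw [key_lt] at h
  rw [hr, key_lt]
  have hrov : ro (rg (π j)) = (if b then co (cg j) else ! co (cg j)) := by
    cases b with
    | true =>
      have := (hco (cg j) (rg (π j))).1 hb'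
      simp [← this]
    | false =>
      have := (hco (cg j) (rg (π j))).2 hb'
      cases hx : co (cg j) <;> cases hy : ro (rg (π j)) <;> simp_all
  cases b with
  | true =>
    cases hcob : co (cg j) with
    | true =>
      simp only [hcob, if_true] at h ⊢
      simp only [hrov, hcob, if_true]
      have := hdir i j h hc hr true hb
      simpa using this
    | false =>
      simp only [hcob] at h ⊢
      simp only [if_false, Bool.false_eq_true] at h
      simp only [hrov, hcob, if_true]
      simp only [Bool.false_eq_true, if_false]
      have := hdir j i h hc.symm hr.symm true hb'
      simpa using this
  | false =>
    cases hcob : co (cg j) with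
    | true =>
      simp only [hcob, if_true] at h ⊢
      simp only [hrov, hcob]
      simp only [Bool.not_true, Bool.false_eq_true, if_false]
      have := hdir i j h hc hr false hb
      simpa using this
    | false =>
      simp only [hcob] at h ⊢
      simp only [if_false, Bool.false_eq_true] at h
      simp only [hrov, hcob]
      simp only [Bool.not_false, if_true, Bool.false_eq_true, if_false]
      have := hdir j i h hc.symm hr.symm false hb'
      simpa using this

lemma key_cc' {i j : Fin n} (hc : cg i = cg j) (hr : rg (π i) = rg (π j))
    (h : key (ro (rg (π i))) (π i).val < key (ro (rg (π j))) (π j).val) :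
    key (co (cg i)) i.val < key (co (cg j)) j.val := by
  have hij : i ≠ j := by
    rintro rfl; exact absurd h (lt_irrefl _)
  rcases lt_trichotomy (key (co (cg i)) i.val) (key (co (cg j)) j.val) with h1 | h1 | h1
  · exact h1
  · rw [hc] at h1
    exact absurd (Fin.val_injective (key_inj h1) : i = j) hij
  · have := key_cc M co ro π cg rg hco hM hdir hc.symm hr.symm h1
    exact absurd h (asymm this)

end CC


section MainInduction
variable {k l n : ℕ}
variable (M : Fin k → Fin l → Option Bool) (co : Fin k → Bool) (ro : Fin l → Bool)
  (π : Equiv.Perm (Fin n)) (cg : Fin n → Fin k) (rg : Fin n → Fin l)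

variable (hco : PPM.ConsistentOrientation M co ro)
  (hM : ∀ i, (M (cg i) (rg (π i))).isSome)
  (hdir : ∀ i j : Fin n, i < j → cg i = cg j → rg (π i) = rg (π j) →
    ∀ b, M (cg i) (rg (π i)) = some b → (if b then π i < π j else π j < π i))

include hco hM hdir

lemma exists_order (N : ℕ) : ∀ (C : Finset (Fin k × Fin l)), C.card ≤ N →
    (cellG C).IsAcyclic →
    ∀ S : Finset (Fin n), (∀ i ∈ S, (cg i, rg (π i)) ∈ C) →
    ∃ t : Fin n → ℚ, ∀ i ∈ S, ∀ j ∈ S, ConR co ro π cg rg i j → t i < t j := by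
  classical
  induction N with
  | zero =>
    intro C hcard _ S hS
    have hC : C = ∅ := Finset.card_eq_zero.mp (le_antisymm hcard (Nat.zero_le _))
    exact ⟨0, fun i hi => absurd (hS i hi) (hC ▸ Finset.notMem_empty _)⟩
  | succ N ih =>
    intro C hcard hac S hS
    rcases Finset.eq_empty_or_nonempty C with rfl | hne
    · exact ⟨0, fun i hi => absurd (hS i hi) (Finset.notMem_empty _)⟩
    obtain ⟨X, hXC, hpeel⟩ := exists_peelable hne hac
    have hcard' : (C.erase X).card ≤ N := by
      rw [Finset.card_erase_of_mem hXC]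
      have := Finset.card_pos.mpr hne
      omega
    set Xpts := S.filter (fun i => (cg i, rg (π i)) = X) with hXpts
    have hXptscell : ∀ p ∈ Xpts, cg p = X.1 ∧ rg (π p) = X.2 := by
      intro p hp
      rw [hXpts, Finset.mem_filter] at hp
      exact ⟨congrArg Prod.fst hp.2, congrArg Prod.snd hp.2⟩
    have hsub : ∀ i ∈ S \ Xpts, (cg i, rg (π i)) ∈ C.erase X := by
      intro i hi
      rw [Finset.mem_sdiff] at hi
      refine Finset.mem_erase.mpr ⟨?_, hS i hi.1⟩
      intro heq
      exact hi.2 (Finset.mem_filter.mpr ⟨hi.1, heq⟩)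
    have hnotX : ∀ j ∈ S \ Xpts, (cg j, rg (π j)) ≠ X := by
      intro j hj heq
      rw [Finset.mem_sdiff] at hj
      exact hj.2 (Finset.mem_filter.mpr ⟨hj.1, heq⟩)
    rcases hpeel with hp | hp
    · -- Pcol : X alone in its column; merge using the row key
      have hacE := acyclic_mono (peel_subgraph_col hXC hp) hac
      obtain ⟨t', ht'⟩ := ih (C.erase X) hcard' hacE (S \ Xpts) hsub
      have hcolj : ∀ j ∈ S \ Xpts, cg j ≠ X.1 := by
        intro j hj heq
        exact hnotX j hj (hp.1 (cg j, rg (π j)) (hS j (Finset.mem_sdiff.mp hj).1) heq)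
      refine merge_order (ConR co ro π cg rg) S Xpts
        ((S \ Xpts).filter (fun j => rg (π j) = X.2))
        (Finset.filter_subset _ _) (Finset.filter_subset _ _)
        (fun i => key (ro X.2) (π i).val) t' ht' ?_ ?_ ?_
      · -- h2
        intro p hp' q hq' hcon
        obtain ⟨hc1, hr1⟩ := hXptscell p hp'
        obtain ⟨hc2, hr2⟩ := hXptscell q hq'
        have hkeyr : key (ro (rg (π p))) (π p).val < key (ro (rg (π q))) (π q).val := by
          rcases hcon with ⟨hceq, hkey⟩ | ⟨hreq, hkey⟩
          · exact key_cc M co ro π cg rg hco hM hdir hceq (hr1.trans hr2.symm) hkey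
          · exact hkey
        rw [hr1, hr2] at hkeyr
        exact hkeyr
      · -- h3
        intro p hp' j hj
        obtain ⟨hc1, hr1⟩ := hXptscell p hp'
        constructor
        · intro hcon
          rcases hcon with ⟨hceq, hkey⟩ | ⟨hreq, hkey⟩
          · exact absurd (hceq.symm.trans hc1) (hcolj j hj)
          · have hrj : rg (π j) = X.2 := hreq.symm.trans hr1
            refine ⟨Finset.mem_filter.mpr ⟨hj, hrj⟩, ?_⟩
            rw [hr1, hrj] at hkey
            simpa using hkey
        · intro hcon
          rcases hcon with ⟨hceq, hkey⟩ | ⟨hreq, hkey⟩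
          · exact absurd (hceq.trans hc1) (hcolj j hj)
          · have hrj : rg (π j) = X.2 := hreq.trans hr1
            refine ⟨Finset.mem_filter.mpr ⟨hj, hrj⟩, ?_⟩
            rw [hr1, hrj] at hkey
            simpa using hkey
      · -- h4
        intro j hj j' hj' hkey
        rw [Finset.mem_filter] at hj hj'
        refine ht' j hj.1 j' hj'.1 (Or.inr ⟨hj.2.trans hj'.2.symm, ?_⟩)
        rw [hj.2, hj'.2]
        exact hkey
    · -- Prow : X alone in its row; merge using the column key
      have hacE := acyclic_mono (peel_subgraph_row hXC hp) hac
      obtain ⟨t', ht'⟩ := ih (C.erase X) hcard' hacE (S \ Xpts) hsub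
      have hrowj : ∀ j ∈ S \ Xpts, rg (π j) ≠ X.2 := by
        intro j hj heq
        exact hnotX j hj (hp.1 (cg j, rg (π j)) (hS j (Finset.mem_sdiff.mp hj).1) heq)
      refine merge_order (ConR co ro π cg rg) S Xpts
        ((S \ Xpts).filter (fun j => cg j = X.1))
        (Finset.filter_subset _ _) (Finset.filter_subset _ _)
        (fun i => key (co X.1) i.val) t' ht' ?_ ?_ ?_
      · -- h2
        intro p hp' q hq' hcon
        obtain ⟨hc1, hr1⟩ := hXptscell p hp'
        obtain ⟨hc2, hr2⟩ := hXptscell q hq'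
        have hkeyc : key (co (cg p)) p.val < key (co (cg q)) q.val := by
          rcases hcon with ⟨hceq, hkey⟩ | ⟨hreq, hkey⟩
          · exact hkey
          · exact key_cc' M co ro π cg rg hco hM hdir (hc1.trans hc2.symm) hreq hkey
        rw [hc1, hc2] at hkeyc
        exact hkeyc
      · -- h3
        intro p hp' j hj
        obtain ⟨hc1, hr1⟩ := hXptscell p hp'
        constructor
        · intro hcon
          rcases hcon with ⟨hceq, hkey⟩ | ⟨hreq, hkey⟩
          · have hcj : cg j = X.1 := hceq.symm.trans hc1
            refine ⟨Finset.mem_filter.mpr ⟨hj, hcj⟩, ?_⟩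
            rw [hc1, hcj] at hkey
            simpa using hkey
          · exact absurd (hreq.symm.trans hr1) (hrowj j hj)
        · intro hcon
          rcases hcon with ⟨hceq, hkey⟩ | ⟨hreq, hkey⟩
          · have hcj : cg j = X.1 := hceq.trans hc1
            refine ⟨Finset.mem_filter.mpr ⟨hj, hcj⟩, ?_⟩
            rw [hc1, hcj] at hkey
            simpa using hkey
          · exact absurd (hreq.trans hr1) (hrowj j hj)
      · -- h4
        intro j hj j' hj' hkey
        rw [Finset.mem_filter] at hj hj'
        refine ht' j hj.1 j' hj'.1 (Or.inl ⟨hj.2.trans hj'.2.symm, ?_⟩)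
        rw [hj.2, hj'.2]
        exact hkey

lemma global_time (hforest : (PPM.monCellGraph M).IsAcyclic) :
    ∃ t : Fin n → ℚ, ∀ i j, ConR co ro π cg rg i j → t i < t j := by
  classical
  set C₀ : Finset (Fin k × Fin l) := Finset.univ.filter (fun X => (M X.1 X.2).isSome)
    with hC₀
  have hle : cellG C₀ ≤ PPM.monCellGraph M := by
    intro p q hadj
    rw [cellG, SimpleGraph.fromRel_adj] at hadj
    rw [PPM.monCellGraph, SimpleGraph.fromRel_adj]
    refine ⟨hadj.1, ?_⟩
    have key : ∀ a b : Fin k × Fin l, a ≠ b → cellRel C₀ a b → PPM.MonCellAdj M a b := by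
      rintro a b hab ⟨ha, hb, hrest⟩
      rw [hC₀, Finset.mem_filter] at ha hb
      refine ⟨ha.2, hb.2, ?_⟩
      rcases hrest with ⟨h1, h2⟩ | ⟨h1, h2⟩
      · refine Or.inl ⟨h1, ?_, ?_⟩
        · intro h2eq
          exact hab (Prod.ext h1 h2eq)
        · intro x hx
          have := h2 x hx
          rw [hC₀, Finset.mem_filter] at this
          simp only [Finset.mem_univ, true_and] at this
          exact Option.not_isSome_iff_eq_none.mp this
      · refine Or.inr ⟨h1, ?_, ?_⟩
        · intro h1eq
          exact hab (Prod.ext h1eq h1)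
        · intro x hx
          have := h2 x hx
          rw [hC₀, Finset.mem_filter] at this
          simp only [Finset.mem_univ, true_and] at this
          exact Option.not_isSome_iff_eq_none.mp this
    rcases hadj.2 with h | h
    · exact Or.inl (key _ _ hadj.1 h)
    · exact Or.inr (key _ _ (Ne.symm hadj.1) h)
  obtain ⟨t, ht⟩ := exists_order M co ro π cg rg hco hM hdir C₀.card C₀ le_rfl
    (acyclic_mono hle hforest) Finset.univ
    (fun i _ => by rw [hC₀, Finset.mem_filter]; exact ⟨Finset.mem_univ _, hM i⟩)
  exact ⟨t, fun i j => ht i (Finset.mem_univ _) j (Finset.mem_univ _)⟩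

end MainInduction

end PPMaux

namespace PPMaux
section Trees
open PPM

lemma leafList_ne_nil {α : Type} : ∀ (T : GTree α), T.leafList ≠ []
  | GTree.leaf a => by simp [GTree.leafList]
  | GTree.node lt rt => by
    simp only [GTree.leafList]
    intro h
    exact leafList_ne_nil lt (List.append_eq_nil_iff.mp h).1

def comb {α : Type} (a : α) : List α → GTree α
  | [] => GTree.leaf a
  | b :: t => GTree.node (GTree.leaf a) (comb b t)

lemma comb_leafList {α : Type} : ∀ (L : List α) (a : α), (comb a L).leafList = a :: L
  | [], a => rfl
  | b :: t, a => by
    simp only [comb, GTree.leafList, comb_leafList t b]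
    rfl

lemma comb_caterpillar {α : Type} : ∀ (L : List α) (a : α), (comb a L).IsCaterpillar
  | [], a => trivial
  | b :: t, a => ⟨Or.inl ⟨a, rfl⟩, trivial, comb_caterpillar t b⟩

lemma comb_subtrees {α : Type} : ∀ (L : List α) (a : α), ∀ T ∈ (comb a L).subtrees,
    (∃ m, T.leafList = (a :: L).drop m) ∨ (∃ x ∈ a :: L, T = GTree.leaf x)
  | [], a => by
    intro T hT
    simp only [comb, GTree.subtrees, List.mem_singleton] at hT
    exact Or.inr ⟨a, List.mem_singleton.mpr rfl, hT⟩
  | b :: t, a => by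
    intro T hT
    simp only [comb, GTree.subtrees, List.mem_cons, List.mem_append,
      List.mem_singleton] at hT
    rcases hT with rfl | (h | hT)
    · left
      refine ⟨0, ?_⟩
      show (GTree.node (GTree.leaf a) (comb b t)).leafList = a :: b :: t
      simp only [GTree.leafList, comb_leafList]
      rfl
    · rcases h with rfl | h
      · exact Or.inr ⟨a, List.mem_cons_self, rfl⟩
      · exact absurd h (fun h' => List.not_mem_nil h')
    · rcases comb_subtrees t b T hT with ⟨m, hm⟩ | ⟨x, hx, hxe⟩
      · exact Or.inl ⟨m + 1, by simpa using hm⟩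
      · exact Or.inr ⟨x, List.mem_cons_of_mem _ hx, hxe⟩

lemma foldr_max_le (K : ℕ) : ∀ (L : List ℕ), (∀ x ∈ L, x ≤ K) → L.foldr max 0 ≤ K
  | [], _ => Nat.zero_le K
  | x :: t, h => by
    simp only [List.foldr_cons]
    exact max_le (h x List.mem_cons_self)
      (foldr_max_le K t (fun y hy => h y (List.mem_cons_of_mem _ hy)))

end Trees
end PPMaux

/-- if a monotone gridding matrix admits a consistent orientation and its
cell graph is a forest, every permutation of `Grid(M)` has path-width at most `max k l`. -/
theorem pathwidth_le_of_forest {k l : ℕ} (M : Fin k → Fin l → Option Bool)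
    (c : Fin k → Bool) (r : Fin l → Bool) (hco : ConsistentOrientation M c r)
    (hforest : (monCellGraph M).IsAcyclic)
    {n : ℕ} (π : Equiv.Perm (Fin n)) (hπ : MonGriddable M π) :
    pw π ≤ max k l := by
  classical
  obtain ⟨cg, rg, hmc, hmr, hM, hdir⟩ := hπ
  rcases Nat.eq_zero_or_pos n with hn | hn
  · -- n = 0 : there are no grid trees at all
    subst hn
    have hset : {w | ∃ T, IsGridTree π T ∧ T.IsCaterpillar ∧ treeGW T = w} = ∅ := by
      rw [Set.eq_empty_iff_forall_notMem]
      rintro w ⟨T, -, -, -⟩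
      obtain ⟨x, xs, -⟩ := List.exists_cons_of_ne_nil (PPMaux.leafList_ne_nil T)
      exact x.1.elim0
    rw [pw, hset, Nat.sInf_empty]
    exact Nat.zero_le _
  · obtain ⟨t, ht⟩ := PPMaux.global_time M c r π cg rg hco hM hdir hforest
    -- sort points by time
    set rel : Fin n → Fin n → Prop := fun i j => t i < t j ∨ (t i = t j ∧ i ≤ j) with hrel
    haveI hdec : DecidableRel rel := fun i j => by rw [hrel]; infer_instance
    haveI htrans : IsTrans (Fin n) rel := by
      constructor
      rintro a b d (h | ⟨h1, h2⟩) (h' | ⟨h1', h2'⟩)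
      · exact Or.inl (h.trans h')
      · exact Or.inl (h1' ▸ h)
      · exact Or.inl (lt_of_le_of_lt (le_of_eq h1) h')
      · exact Or.inr ⟨h1.trans h1', h2.trans h2'⟩
    haveI hanti : IsAntisymm (Fin n) rel := by
      constructor
      rintro a b (h | ⟨h1, h2⟩) (h' | ⟨h1', h2'⟩)
      · exact absurd h' (asymm h)
      · exact absurd h (not_lt.mpr (le_of_eq h1'))
      · exact absurd h' (not_lt.mpr (le_of_eq h1))
      · exact le_antisymm h2 h2'
    haveI htot : IsTotal (Fin n) rel := by
      constructor
      intro a b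
      rcases lt_trichotomy (t a) (t b) with h | h | h
      · exact Or.inl (Or.inl h)
      · rcases le_total a b with h2 | h2
        · exact Or.inl (Or.inr ⟨h, h2⟩)
        · exact Or.inr (Or.inr ⟨h.symm, h2⟩)
      · exact Or.inr (Or.inl h)
    set L := Finset.sort Finset.univ rel with hLdef
    have hsorted : L.Pairwise rel := Finset.pairwise_sort _ rel
    have hnodup : L.Nodup := Finset.sort_nodup _ rel
    have hmemL : ∀ y : Fin n, y ∈ L := fun y => (Finset.mem_sort rel).mpr (Finset.mem_univ y)
    have hLtoF : L.toFinset = Finset.univ := Finset.sort_toFinset _ rel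
    -- upward closure of suffixes
    have hup : ∀ (m : ℕ) (x y : Fin n), x ∈ (L.drop m).toFinset → t x < t y →
        y ∈ (L.drop m).toFinset := by
      intro m x y hx hlt
      rw [List.mem_toFinset] at hx ⊢
      have hy : y ∈ L.take m ++ L.drop m := by
        rw [List.take_append_drop]; exact hmemL y
      rcases List.mem_append.mp hy with h | h
      · exfalso
        have hpw : List.Pairwise rel (L.take m ++ L.drop m) := by
          rw [List.take_append_drop]; exact hsorted
        have h3 := (List.pairwise_append.mp hpw).2.2 y h x hx
        rcases h3 with h3 | ⟨h3, -⟩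
        · exact absurd hlt (asymm h3)
        · exact absurd hlt (not_lt.mpr (le_of_eq h3))
      · exact h
    set pt : Fin n → Fin n × Fin n := fun i => (i, π i) with hpt
    -- bound for the suffix point sets
    have hsuffix : ∀ m : ℕ, gridComplexity (((L.drop m).toFinset).image pt) ≤ max k l := by
      intro m
      set A := (L.drop m).toFinset with hA
      have hx_eq : (A.image pt).image Prod.fst = A := by
        ext x; simp [hpt]
      have hy_eq : (A.image pt).image Prod.snd = A.image (fun i => π i) := by
        ext x; simp [hpt]
      rw [gridComplexity, hx_eq, hy_eq]
      refine max_le_max ?_ ?_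
      · -- columns
        refine PPMaux.intervalicity_le A cg ?_
        intro x hxA z hzA y h1 h2 hgxz
        have hgyx : cg y = cg x := le_antisymm (hgxz ▸ hmc h2) (hmc h1)
        refine ⟨?_, hgyx⟩
        rcases eq_or_lt_of_le h1 with rfl | hlt1
        · exact hxA
        rcases eq_or_lt_of_le h2 with rfl | hlt2
        · exact hzA
        cases hb : c (cg x) with
        | true =>
          have hcon : PPMaux.ConR c r π cg rg x y :=
            Or.inl ⟨hgyx.symm, by
              rw [hgyx, hb]
              exact PPMaux.key_lt_true hlt1⟩
          exact hup m x y hxA (ht x y hcon)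
        | false =>
          have hcon : PPMaux.ConR c r π cg rg z y :=
            Or.inl ⟨(hgxz.symm.trans hgyx.symm : cg z = cg y), by
              rw [hgyx, ← hgxz, hb]
              exact PPMaux.key_lt_false hlt2⟩
          exact hup m z y hzA (ht z y hcon)
      · -- rows
        refine PPMaux.intervalicity_le _ rg ?_
        intro u huB w hwB v h1 h2 hguw
        have hgvu : rg v = rg u := le_antisymm (hguw ▸ hmr h2) (hmr h1)
        refine ⟨?_, hgvu⟩
        rcases eq_or_lt_of_le h1 with rfl | hlt1
        · exact huB
        rcases eq_or_lt_of_le h2 with rfl | hlt2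
        · exact hwB
        obtain ⟨x, hxA, hxu⟩ := Finset.mem_image.mp huB
        obtain ⟨z, hzA, hzw⟩ := Finset.mem_image.mp hwB
        set y := π.symm v with hydef
        have hπy : π y = v := Equiv.apply_symm_apply π v
        have hmem : ∀ y', y' ∈ A → v = π y' → v ∈ A.image (fun i => π i) :=
          fun y' hy' hv => Finset.mem_image.mpr ⟨y', hy', hv.symm⟩
        cases hb : r (rg u) with
        | true =>
          have hcon : PPMaux.ConR c r π cg rg x y := by
            refine Or.inr ⟨?_, ?_⟩
            · rw [hxu, hπy]; exact hgvu.symm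
            · rw [hxu, hπy, hgvu, hb]
              exact PPMaux.key_lt_true hlt1
          exact hmem y (hup m x y hxA (ht x y hcon)) hπy.symm
        | false =>
          have hcon : PPMaux.ConR c r π cg rg z y := by
            refine Or.inr ⟨?_, ?_⟩
            · rw [hzw, hπy, hgvu, hguw]
            · rw [hzw, hπy, hgvu, ← hguw, hb]
              exact PPMaux.key_lt_false hlt2
          exact hmem y (hup m z y hzA (ht z y hcon)) hπy.symm
    -- the singleton bound
    have hsingle : ∀ i : Fin n, gridComplexity ({pt i} : Finset (Fin n × Fin n)) ≤ max k l := by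
      intro i
      have hx_eq : ({pt i} : Finset (Fin n × Fin n)).image Prod.fst = {i} := by
        ext x; simp [hpt]
      have hy_eq : ({pt i} : Finset (Fin n × Fin n)).image Prod.snd = {π i} := by
        ext x; simp [hpt]
      rw [gridComplexity, hx_eq, hy_eq]
      refine max_le_max ?_ ?_
      · refine PPMaux.intervalicity_le _ cg ?_
        intro x hx z hz y h1 h2 _
        rw [Finset.mem_singleton] at hx hz
        have h2' : y ≤ x := by rw [hx, ← hz]; exact h2
        have hyx : y = x := le_antisymm h2' h1
        exact ⟨by rw [hyx, hx]; exact Finset.mem_singleton_self _, by rw [hyx]⟩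
      · refine PPMaux.intervalicity_le _ rg ?_
        intro x hx z hz y h1 h2 _
        rw [Finset.mem_singleton] at hx hz
        have h2' : y ≤ x := by rw [hx, ← hz]; exact h2
        have hyx : y = x := le_antisymm h2' h1
        exact ⟨by rw [hyx, hx]; exact Finset.mem_singleton_self _, by rw [hyx]⟩
    -- build the caterpillar tree
    have hLlen : L ≠ [] := by
      intro h
      have := Finset.length_sort rel (s := (Finset.univ : Finset (Fin n)))
      rw [← hLdef, h] at this
      simp at this
      omega
    obtain ⟨a, L', hL⟩ := List.exists_cons_of_ne_nil hLlen
    set T := PPMaux.comb (pt a) (L'.map pt) with hT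
    have hTleaf : T.leafList = L.map pt := by
      rw [hT, PPMaux.comb_leafList, hL]
      rfl
    have hgrid : IsGridTree π T := by
      constructor
      · rw [hTleaf]
        exact hnodup.map (fun i j h => congrArg Prod.fst h)
      · rw [hTleaf]
        ext x
        simp only [List.mem_toFinset, List.mem_map, diagram, Finset.mem_image,
          Finset.mem_univ, true_and]
        constructor
        · rintro ⟨i, -, rfl⟩; exact ⟨i, rfl⟩
        · rintro ⟨i, rfl⟩; exact ⟨i, hmemL i, rfl⟩
    have hcat : T.IsCaterpillar := PPMaux.comb_caterpillar _ _
    have hgw : treeGW T ≤ max k l := by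
      rw [treeGW]
      refine PPMaux.foldr_max_le _ _ ?_
      intro x hx
      obtain ⟨T', hT', rfl⟩ := List.mem_map.mp hx
      rcases PPMaux.comb_subtrees (L'.map pt) (pt a) T' hT' with ⟨m, hm⟩ | ⟨q, hq, rfl⟩
      · have hfin : T'.leafList.toFinset = ((L.drop m).toFinset).image pt := by
          rw [hm, show (pt a :: L'.map pt) = L.map pt from by rw [hL]; rfl,
            ← List.map_drop]
          ext u
          simp only [List.mem_toFinset, List.mem_map, Finset.mem_image]
        rw [hfin]
        exact hsuffix m
      · have : q ∈ L.map pt := by rw [hL]; exact hq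
        obtain ⟨i, -, rfl⟩ := List.mem_map.mp this
        have hfin : (GTree.leaf (pt i) : GTree (Fin n × Fin n)).leafList.toFinset
            = {pt i} := by
          simp [GTree.leafList]
        rw [hfin]
        exact hsingle i
    have hpwle : pw π ≤ treeGW T := Nat.sInf_le ⟨T, hgrid, hcat, rfl⟩
    exact hpwle.trans hgw
end

section
/- Let M be a monotone gridding matrix whose cell graph G_M is a path of length k (all other entries empty). Then there exists a permutation π ∈ Grid(M) with grid-width at least k/4. -/
open PPM

namespace PPMProof
set_option linter.unusedVariables false
set_option linter.unnecessarySeqFocus false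

open Finset PPM

variable {n : ℕ}

lemma interval_set_nonempty (A : Finset (Fin n)) :
    {m | ∃ F : Finset (Finset (Fin n)), F.card = m ∧
      (∀ I ∈ F, ∃ a b : Fin n, I = Finset.Icc a b) ∧
      (F : Set (Finset (Fin n))).PairwiseDisjoint id ∧ F.sup id = A}.Nonempty := by
  classical
  refine ⟨(A.image fun a => Finset.Icc a a).card,
    A.image (fun a => Finset.Icc a a), rfl, ?_, ?_, ?_⟩
  · intro I hI
    simp only [mem_image] at hI
    obtain ⟨a, _, rfl⟩ := hI
    exact ⟨a, a, rfl⟩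
  · intro I hI J hJ hIJ
    simp only [coe_image, Set.mem_image] at hI hJ
    obtain ⟨a, _, rfl⟩ := hI
    obtain ⟨b, _, rfl⟩ := hJ
    have hab : a ≠ b := fun h => hIJ (by rw [h])
    simp only [Function.onFun, id_eq, Finset.Icc_self]
    simp [Finset.disjoint_singleton]
    exact fun h => hab h
  · ext x
    simp only [Finset.mem_sup, mem_image]
    constructor
    · rintro ⟨I, ⟨a, ha, rfl⟩, hx⟩
      simp only [Finset.Icc_self, id_eq, mem_singleton] at hx
      exact hx ▸ ha
    · intro hx
      exact ⟨Finset.Icc x x, ⟨x, hx, rfl⟩, by simp⟩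

lemma le_intervalicity_of_chain {s : ℕ} (A : Finset (Fin n)) (x : Fin s → Fin n)
    (hmono : StrictMono x) (hxA : ∀ i, x i ∈ A)
    (hsep : ∀ i j : Fin s, i < j → ∃ y : Fin n, x i < y ∧ y < x j ∧ y ∉ A) :
    s ≤ PPM.intervalicity A := by
  classical
  refine le_csInf (interval_set_nonempty A) ?_
  rintro b ⟨F, rfl, hIcc, hdisj, hsup⟩
  have hmem : ∀ i : Fin s, ∃ I ∈ F, x i ∈ I := by
    intro i
    have hx : x i ∈ F.sup id := hsup ▸ hxA i
    simpa using Finset.mem_sup.mp hx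
  choose φ hφF hφmem using hmem
  have key : ∀ i j : Fin s, i < j → φ i ≠ φ j := by
    intro i j hij heq
    obtain ⟨a, c, hac⟩ := hIcc (φ i) (hφF i)
    obtain ⟨y, hy1, hy2, hyA⟩ := hsep i j hij
    have hxi := hφmem i
    have hxj := hφmem j
    rw [← heq, hac] at hxj
    rw [hac] at hxi
    rw [Finset.mem_Icc] at hxi hxj
    have hyI : y ∈ φ i := by
      rw [hac, Finset.mem_Icc]
      exact ⟨le_trans hxi.1 hy1.le, le_trans hy2.le hxj.2⟩
    have : y ∈ F.sup id := Finset.mem_sup.mpr ⟨φ i, hφF i, hyI⟩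
    rw [hsup] at this
    exact hyA this
  have hinj : Set.InjOn φ (Finset.univ : Finset (Fin s)) := by
    intro i _ j _ h
    by_contra hne
    rcases lt_or_gt_of_ne hne with hlt | hlt
    · exact key i j hlt h
    · exact key j i hlt h.symm
  have := Finset.card_le_card_of_injOn φ (fun i _ => hφF i) hinj
  simpa using this

/-- descents: `q ∈ A` with successor position not in `A`. -/
lemma card_desc_le (A W : Finset (Fin n))
    (hW : ∀ q ∈ W, q ∈ A ∧ ∃ q' : Fin n, (q' : ℕ) = (q : ℕ) + 1 ∧ q' ∉ A) :
    W.card ≤ PPM.intervalicity A := by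
  classical
  set e := W.orderIsoOfFin rfl with he
  refine le_intervalicity_of_chain A (fun i => (e i : Fin n)) ?_ ?_ ?_
  · intro i j hij
    have := e.lt_iff_lt.mpr hij
    exact this
  · intro i
    exact (hW _ (e i).2).1
  · intro i j hij
    obtain ⟨q', hq1, hq2⟩ := (hW _ (e i).2).2
    refine ⟨q', ?_, ?_, hq2⟩
    · have : ((e i : Fin n) : ℕ) < (q' : ℕ) := by omega
      exact this
    · have hlt : (e i : Fin n) < (e j : Fin n) := e.lt_iff_lt.mpr hij
      have hle : (q' : ℕ) ≤ ((e j : Fin n) : ℕ) := by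
        have : ((e i : Fin n) : ℕ) < ((e j : Fin n) : ℕ) := hlt
        omega
      have hne : q' ≠ (e j : Fin n) := by
        intro h
        exact hq2 (h ▸ (hW _ (e j).2).1)
      exact lt_of_le_of_ne (by exact hle) (fun h => hne (Fin.ext (by exact_mod_cast congrArg Fin.val h)))

/-- ascents: `q ∉ A` with successor position in `A`. -/
lemma card_asc_le (A W : Finset (Fin n))
    (hW : ∀ q ∈ W, q ∉ A ∧ ∃ q' : Fin n, (q' : ℕ) = (q : ℕ) + 1 ∧ q' ∈ A) :
    W.card ≤ PPM.intervalicity A := by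
  classical
  set e := W.orderIsoOfFin rfl with he
  have hch : ∀ i : Fin W.card, ∃ q' : Fin n, (q' : ℕ) = ((e i : Fin n) : ℕ) + 1 ∧ q' ∈ A :=
    fun i => (hW _ (e i).2).2
  choose f hf1 hf2 using hch
  refine le_intervalicity_of_chain A f ?_ (fun i => hf2 i) ?_
  · intro i j hij
    have hlt : ((e i : Fin n) : ℕ) < ((e j : Fin n) : ℕ) := e.lt_iff_lt.mpr hij
    have h1 := hf1 i
    have h2 := hf1 j
    have : (f i : ℕ) < (f j : ℕ) := by omega
    exact this
  · intro i j hij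
    refine ⟨(e j : Fin n), ?_, ?_, (hW _ (e j).2).1⟩
    · have hlt : ((e i : Fin n) : ℕ) < ((e j : Fin n) : ℕ) := e.lt_iff_lt.mpr hij
      have h1 := hf1 i
      have hle : (f i : ℕ) ≤ ((e j : Fin n) : ℕ) := by omega
      have hne : f i ≠ (e j : Fin n) := by
        intro h
        exact (hW _ (e j).2).1 (h ▸ hf2 i)
      exact lt_of_le_of_ne (by exact hle) (fun h => hne (Fin.ext (by exact_mod_cast congrArg Fin.val h)))
    · have : ((e j : Fin n) : ℕ) < (f j : ℕ) := by
        have := hf1 j; omega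
      exact this

lemma exists_switch (P : ℕ → Prop) : ∀ {a b : ℕ}, a ≤ b → P a → ¬ P b →
    ∃ q, a ≤ q ∧ q + 1 ≤ b ∧ P q ∧ ¬ P (q + 1) := by
  intro a b
  induction b with
  | zero => intro hab ha hb; interval_cases a; exact absurd ha hb
  | succ b ih =>
    intro hab ha hb
    by_cases hPb : P b
    · rcases Nat.lt_or_ge a (b+1) with h | h
      · exact ⟨b, by omega, le_refl _, hPb, hb⟩
      · have : a = b + 1 := by omega
        exact absurd ha (this ▸ hb)
    · have hab' : a ≤ b := by
        rcases Nat.lt_or_ge a (b+1) with h | h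
        · omega
        · have : a = b + 1 := by omega
          exact absurd ha (this ▸ hb)
      obtain ⟨q, h1, h2, h3, h4⟩ := ih hab' ha hPb
      exact ⟨q, h1, by omega, h3, h4⟩

lemma dist_le_sum (f : ℕ → ℕ) : ∀ i j, i ≤ j →
    Nat.dist (f i) (f j) ≤ ∑ t ∈ Finset.Ico i j, Nat.dist (f t) (f (t+1)) := by
  intro i j
  induction j with
  | zero => intro h; interval_cases i; simp [Nat.dist_self]
  | succ j ih =>
    intro hij
    rcases Nat.lt_or_ge i (j+1) with h | h
    · have hij' : i ≤ j := by omega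
      have h1 := ih hij'
      have h2 : Nat.dist (f i) (f (j+1)) ≤ Nat.dist (f i) (f j) + Nat.dist (f j) (f (j+1)) :=
        Nat.dist.triangle_inequality _ _ _
      have h3 : ∑ t ∈ Finset.Ico i (j+1), Nat.dist (f t) (f (t+1)) =
          (∑ t ∈ Finset.Ico i j, Nat.dist (f t) (f (t+1))) + Nat.dist (f j) (f (j+1)) := by
        rw [Finset.sum_Ico_succ_top hij']
      omega
    · have : i = j + 1 := by omega
      subst this
      simp [Nat.dist_self]


open PPM PPM.GTree
variable {α : Type}

lemma leafList_length_pos (T : PPM.GTree α) : 0 < T.leafList.length := by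
  induction T with
  | leaf a => simp [PPM.GTree.leafList]
  | node l r ihl ihr => simp [PPM.GTree.leafList]; omega

lemma self_mem_subtrees (T : PPM.GTree α) : T ∈ T.subtrees := by
  cases T with
  | leaf a => simp [PPM.GTree.subtrees]
  | node l r => simp [PPM.GTree.subtrees]

lemma leafList_sublist {t T : PPM.GTree α} (h : t ∈ T.subtrees) :
    t.leafList.Sublist T.leafList := by
  induction T with
  | leaf a =>
    simp [PPM.GTree.subtrees] at h
    subst h
    exact List.Sublist.refl _
  | node l r ihl ihr =>
    simp only [PPM.GTree.subtrees, List.mem_cons, List.mem_append] at h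
    rcases h with rfl | h | h
    · exact List.Sublist.refl _
    · exact (ihl h).trans (List.sublist_append_left _ _)
    · exact (ihr h).trans (List.sublist_append_right _ _)

lemma exists_balanced {N : ℕ} (hN : 2 ≤ N) :
    ∀ (T : PPM.GTree α), 2*N < 3 * T.leafList.length →
    ∃ t ∈ T.subtrees, N < 3 * t.leafList.length ∧ 3 * t.leafList.length ≤ 2*N := by
  intro T
  induction T with
  | leaf a => intro h; simp [PPM.GTree.leafList] at h; omega
  | node l r ihl ihr =>
    intro h
    have hlen : (PPM.GTree.node l r).leafList.length = l.leafList.length + r.leafList.length := by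
      simp [PPM.GTree.leafList]
    set a := l.leafList.length with ha
    set b := r.leafList.length with hb
    rcases le_total b a with hba | hab
    · by_cases h3 : 3 * a ≤ 2 * N
      · refine ⟨l, ?_, by omega, h3⟩
        simp only [PPM.GTree.subtrees, List.mem_cons, List.mem_append]
        exact Or.inr (Or.inl (self_mem_subtrees l))
      · obtain ⟨t, ht, h1, h2⟩ := ihl (by omega)
        refine ⟨t, ?_, h1, h2⟩
        simp only [PPM.GTree.subtrees, List.mem_cons, List.mem_append]
        exact Or.inr (Or.inl ht)
    · by_cases h3 : 3 * b ≤ 2 * N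
      · refine ⟨r, ?_, by omega, h3⟩
        simp only [PPM.GTree.subtrees, List.mem_cons, List.mem_append]
        exact Or.inr (Or.inr (self_mem_subtrees r))
      · obtain ⟨t, ht, h1, h2⟩ := ihr (by omega)
        refine ⟨t, ?_, h1, h2⟩
        simp only [PPM.GTree.subtrees, List.mem_cons, List.mem_append]
        exact Or.inr (Or.inr ht)

lemma le_foldr_max {l : List ℕ} {a : ℕ} (h : a ∈ l) : a ≤ l.foldr max 0 := by
  induction l with
  | nil => simp at h
  | cons x xs ih =>
    simp only [List.mem_cons] at h
    rcases h with rfl | h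
    · exact le_max_left _ _
    · exact le_trans (ih h) (le_max_right _ _)

/-- build a caterpillar whose leafList is `a :: l`. -/
def buildT (a : α) (l : List α) : PPM.GTree α :=
  l.foldl (fun acc b => PPM.GTree.node acc (PPM.GTree.leaf b)) (PPM.GTree.leaf a)

lemma buildT_leafList (a : α) (l : List α) : (buildT a l).leafList = a :: l := by
  suffices h : ∀ (l : List α) (T : PPM.GTree α),
      (l.foldl (fun acc b => PPM.GTree.node acc (PPM.GTree.leaf b)) T).leafList = T.leafList ++ l by
    simpa [buildT, PPM.GTree.leafList] using h l (PPM.GTree.leaf a)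
  intro l
  induction l with
  | nil => intro T; simp
  | cons x xs ih =>
    intro T
    simp only [List.foldl_cons, ih, PPM.GTree.leafList]
    simp


open Finset

structure PathData (k₀ l₀ : ℕ) where
  k : ℕ
  col : ℕ → Fin k₀
  row : ℕ → Fin l₀
  sg : ℕ → Bool

namespace PathData
variable {k₀ l₀ : ℕ} (P : PathData k₀ l₀)

def N : ℕ := (P.k+1) * (3*P.k+3)

abbrev Pt : Type := Fin (P.k+1) × Fin (3*P.k+3)

def Kx (p : P.Pt) : ℕ := (P.col p.1.val).val * P.N + p.2.val * (P.k+1) + p.1.val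

def jy (p : P.Pt) : ℕ := if P.sg p.1.val then p.2.val else (3*P.k+2) - p.2.val

def Ky (p : P.Pt) : ℕ := (P.row p.1.val).val * P.N + P.jy p * (P.k+1) + p.1.val

def invj (t : ℕ) (j : Fin (3*P.k+3)) : Fin (3*P.k+3) :=
  if P.sg t then j else ⟨3*P.k+2 - j.val, by omega⟩

lemma jy_invj (t : Fin (P.k+1)) (j : Fin (3*P.k+3)) :
    P.jy (t, P.invj t.val j) = j.val := by
  unfold jy invj
  by_cases h : P.sg t.val <;> simp [h] <;> omega

lemma invj_invj (t : ℕ) (j : Fin (3*P.k+3)) : P.invj t (P.invj t j) = j := by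
  unfold invj
  by_cases h : P.sg t <;> simp [h]
  exact Fin.ext (by simp; omega)

lemma jy_lt (p : P.Pt) : P.jy p < 3*P.k+3 := by
  unfold jy
  have := p.2.isLt
  by_cases h : P.sg p.1.val <;> simp [h] <;> omega

end PathData

lemma base_inj {B c1 c2 r1 r2 : ℕ} (h1 : r1 < B) (h2 : r2 < B)
    (h : c1 * B + r1 = c2 * B + r2) : c1 = c2 ∧ r1 = r2 := by
  have hB : 0 < B := by omega
  have hr : r1 = r2 := by
    have e1 : (c1 * B + r1) % B = r1 := by
      rw [add_comm, Nat.add_mul_mod_self_right, Nat.mod_eq_of_lt h1]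
    have e2 : (c2 * B + r2) % B = r2 := by
      rw [add_comm, Nat.add_mul_mod_self_right, Nat.mod_eq_of_lt h2]
    rw [← e1, ← e2, h]
  refine ⟨?_, hr⟩
  subst hr
  have := Nat.eq_of_mul_eq_mul_right hB (by omega : c1 * B = c2 * B)
  exact this

lemma base_le {B c1 c2 r1 r2 : ℕ} (h1 : r1 < B) (h2 : r2 < B)
    (h : c1 * B + r1 ≤ c2 * B + r2) : c1 ≤ c2 := by
  have hB : 0 < B := by omega
  have e1 : (c1 * B + r1) / B = c1 := by
    rw [add_comm, Nat.add_mul_div_right _ _ hB, Nat.div_eq_of_lt h1, Nat.zero_add]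
  have e2 : (c2 * B + r2) / B = c2 := by
    rw [add_comm, Nat.add_mul_div_right _ _ hB, Nat.div_eq_of_lt h2, Nat.zero_add]
  rw [← e1, ← e2]
  exact Nat.div_le_div_right h

namespace PathData
variable {k₀ l₀ : ℕ} (P : PathData k₀ l₀)

lemma rem_lt (j t : ℕ) (hj : j < 3*P.k+3) (ht : t < P.k+1) :
    j * (P.k+1) + t < P.N := by
  have h1 : j * (P.k+1) ≤ (3*P.k+2) * (P.k+1) := Nat.mul_le_mul_right _ (by omega)
  have h2 : (3*P.k+2) * (P.k+1) + (P.k+1) = (P.k+1) * (3*P.k+3) := by ring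
  unfold N
  omega

lemma Kx_rearrange (p : P.Pt) :
    P.Kx p = ((P.col p.1.val).val * (3*P.k+3) + p.2.val) * (P.k+1) + p.1.val := by
  unfold Kx N
  ring

lemma Ky_rearrange (p : P.Pt) :
    P.Ky p = ((P.row p.1.val).val * (3*P.k+3) + P.jy p) * (P.k+1) + p.1.val := by
  unfold Ky N
  ring

lemma Kx_inj : Function.Injective P.Kx := by
  intro p q h
  rw [P.Kx_rearrange p, P.Kx_rearrange q] at h
  obtain ⟨h1, h2⟩ := base_inj p.1.isLt q.1.isLt h
  obtain ⟨h3, h4⟩ := base_inj p.2.isLt q.2.isLt h1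
  exact Prod.ext (Fin.ext h2) (Fin.ext h4)

lemma Ky_inj : Function.Injective P.Ky := by
  intro p q h
  rw [P.Ky_rearrange p, P.Ky_rearrange q] at h
  obtain ⟨h1, h2⟩ := base_inj p.1.isLt q.1.isLt h
  obtain ⟨h3, h4⟩ := base_inj (P.jy_lt p) (P.jy_lt q) h1
  have ht : p.1 = q.1 := Fin.ext h2
  have hj : p.2 = q.2 := by
    unfold jy at h4
    rw [h2] at h4
    have hp2 := p.2.isLt
    have hq2 := q.2.isLt
    by_cases hs : P.sg q.1.val <;> simp [hs] at h4 <;> exact Fin.ext (by omega)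
  exact Prod.ext ht hj

lemma Kx_col_le {p q : P.Pt} (h : P.Kx p ≤ P.Kx q) :
    P.col p.1.val ≤ P.col q.1.val := by
  unfold Kx at h
  rw [add_assoc, add_assoc] at h
  exact base_le (P.rem_lt _ _ p.2.isLt p.1.isLt) (P.rem_lt _ _ q.2.isLt q.1.isLt) h

lemma Ky_row_le {p q : P.Pt} (h : P.Ky p ≤ P.Ky q) :
    P.row p.1.val ≤ P.row q.1.val := by
  unfold Ky at h
  rw [add_assoc, add_assoc] at h
  exact base_le (P.rem_lt _ _ (P.jy_lt p) p.1.isLt) (P.rem_lt _ _ (P.jy_lt q) q.1.isLt) h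

lemma card_Pt : Fintype.card P.Pt = P.N := by
  simp [N, Fintype.card_prod]

def Sx : Finset ℕ := Finset.univ.image P.Kx

def Sy : Finset ℕ := Finset.univ.image P.Ky

lemma card_Sx : P.Sx.card = P.N := by
  rw [Sx, Finset.card_image_of_injective _ P.Kx_inj, Finset.card_univ, P.card_Pt]

lemma card_Sy : P.Sy.card = P.N := by
  rw [Sy, Finset.card_image_of_injective _ P.Ky_inj, Finset.card_univ, P.card_Pt]

noncomputable def posx (p : P.Pt) : Fin P.N :=
  (P.Sx.orderIsoOfFin P.card_Sx).symm ⟨P.Kx p, Finset.mem_image_of_mem _ (Finset.mem_univ p)⟩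

noncomputable def posy (p : P.Pt) : Fin P.N :=
  (P.Sy.orderIsoOfFin P.card_Sy).symm ⟨P.Ky p, Finset.mem_image_of_mem _ (Finset.mem_univ p)⟩

lemma posx_lt_iff {p q : P.Pt} : P.posx p < P.posx q ↔ P.Kx p < P.Kx q := by
  unfold posx
  rw [OrderIso.lt_iff_lt]
  exact Subtype.mk_lt_mk

lemma posx_le_iff {p q : P.Pt} : P.posx p ≤ P.posx q ↔ P.Kx p ≤ P.Kx q := by
  unfold posx
  rw [OrderIso.le_iff_le]
  exact Subtype.mk_le_mk

lemma posy_lt_iff {p q : P.Pt} : P.posy p < P.posy q ↔ P.Ky p < P.Ky q := by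
  unfold posy
  rw [OrderIso.lt_iff_lt]
  exact Subtype.mk_lt_mk

lemma posy_le_iff {p q : P.Pt} : P.posy p ≤ P.posy q ↔ P.Ky p ≤ P.Ky q := by
  unfold posy
  rw [OrderIso.le_iff_le]
  exact Subtype.mk_le_mk

lemma posx_inj : Function.Injective P.posx := by
  intro p q h
  apply P.Kx_inj
  have h1 := P.posx_le_iff.mp (le_of_eq h)
  have h2 := P.posx_le_iff.mp (ge_of_eq h)
  omega

lemma posy_inj : Function.Injective P.posy := by
  intro p q h
  apply P.Ky_inj
  have h1 := P.posy_le_iff.mp (le_of_eq h)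
  have h2 := P.posy_le_iff.mp (ge_of_eq h)
  omega

lemma posx_surj : Function.Surjective P.posx := by
  intro i
  obtain ⟨p, _, hp⟩ := Finset.mem_image.mp (P.Sx.orderIsoOfFin P.card_Sx i).2
  refine ⟨p, ?_⟩
  unfold posx
  rw [OrderIso.symm_apply_eq]
  exact Subtype.ext hp

lemma posy_surj : Function.Surjective P.posy := by
  intro i
  obtain ⟨p, _, hp⟩ := Finset.mem_image.mp (P.Sy.orderIsoOfFin P.card_Sy i).2
  refine ⟨p, ?_⟩
  unfold posy
  rw [OrderIso.symm_apply_eq]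
  exact Subtype.ext hp

noncomputable def Ex : P.Pt ≃ Fin P.N :=
  Equiv.ofBijective P.posx ⟨P.posx_inj, P.posx_surj⟩

noncomputable def Ey : P.Pt ≃ Fin P.N :=
  Equiv.ofBijective P.posy ⟨P.posy_inj, P.posy_surj⟩

@[simp] lemma Ex_apply (p : P.Pt) : P.Ex p = P.posx p := rfl
@[simp] lemma Ey_apply (p : P.Pt) : P.Ey p = P.posy p := rfl

@[simp] lemma Ex_symm_posx (p : P.Pt) : P.Ex.symm (P.posx p) = p := P.Ex.symm_apply_apply p
@[simp] lemma Ey_symm_posy (p : P.Pt) : P.Ey.symm (P.posy p) = p := P.Ey.symm_apply_apply p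

lemma posx_Ex_symm (i : Fin P.N) : P.posx (P.Ex.symm i) = i := P.Ex.apply_symm_apply i
lemma posy_Ey_symm (i : Fin P.N) : P.posy (P.Ey.symm i) = i := P.Ey.apply_symm_apply i

lemma posx_succ {p q : P.Pt} (h : P.Kx q = P.Kx p + 1) :
    (P.posx q).val = (P.posx p).val + 1 := by
  have hlt : P.posx p < P.posx q := P.posx_lt_iff.mpr (by omega)
  by_contra hne
  have hmid : (P.posx p).val + 1 < (P.posx q).val := by
    have := (Fin.lt_def.mp hlt)
    omega
  have hlt2 : ((P.posx p).val + 1) < P.N := by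
    have := (P.posx q).isLt
    omega
  set i : Fin P.N := ⟨(P.posx p).val + 1, hlt2⟩ with hi
  set r := P.Ex.symm i with hr
  have hri : P.posx r = i := P.posx_Ex_symm i
  have h1 : P.posx p < P.posx r := by
    rw [hri]
    exact Fin.lt_def.mpr (by simp [hi])
  have h2 : P.posx r < P.posx q := by
    rw [hri]
    exact Fin.lt_def.mpr (by simp [hi]; omega)
  have k1 := P.posx_lt_iff.mp h1
  have k2 := P.posx_lt_iff.mp h2
  omega

lemma posy_succ {p q : P.Pt} (h : P.Ky q = P.Ky p + 1) :
    (P.posy q).val = (P.posy p).val + 1 := by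
  have hlt : P.posy p < P.posy q := P.posy_lt_iff.mpr (by omega)
  by_contra hne
  have hmid : (P.posy p).val + 1 < (P.posy q).val := by
    have := (Fin.lt_def.mp hlt)
    omega
  have hlt2 : ((P.posy p).val + 1) < P.N := by
    have := (P.posy q).isLt
    omega
  set i : Fin P.N := ⟨(P.posy p).val + 1, hlt2⟩ with hi
  set r := P.Ey.symm i with hr
  have hri : P.posy r = i := P.posy_Ey_symm i
  have h1 : P.posy p < P.posy r := by
    rw [hri]
    exact Fin.lt_def.mpr (by simp [hi])
  have h2 : P.posy r < P.posy q := by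
    rw [hri]
    exact Fin.lt_def.mpr (by simp [hi]; omega)
  have k1 := P.posy_lt_iff.mp h1
  have k2 := P.posy_lt_iff.mp h2
  omega

/-- the snake permutation: position `i` has value `posy (Ex.symm i)`. -/
noncomputable def perm : Equiv.Perm (Fin P.N) := P.Ex.symm.trans P.Ey

@[simp] lemma perm_apply (i : Fin P.N) : P.perm i = P.posy (P.Ex.symm i) := rfl

lemma perm_posx (p : P.Pt) : P.perm (P.posx p) = P.posy p := by
  simp

/-- key-successor lemmas used for descent counting. -/
lemma Kx_succ {t : ℕ} (ht : t + 1 ≤ P.k) (hcol : P.col (t+1) = P.col t)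
    (j : Fin (3*P.k+3)) :
    P.Kx (⟨t+1, by omega⟩, j) = P.Kx (⟨t, by omega⟩, j) + 1 := by
  unfold Kx
  simp only
  rw [hcol]
  omega

lemma Ky_succ {t : ℕ} (ht : t + 1 ≤ P.k) (hrow : P.row (t+1) = P.row t)
    (j : Fin (3*P.k+3)) :
    P.Ky (⟨t+1, by omega⟩, P.invj (t+1) j) = P.Ky (⟨t, by omega⟩, P.invj t j) + 1 := by
  unfold Ky
  simp only
  rw [hrow]
  have h1 : P.jy (⟨t+1, by omega⟩, P.invj (t+1) j) = j.val := P.jy_invj ⟨t+1, by omega⟩ j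
  have h2 : P.jy (⟨t, by omega⟩, P.invj t j) = j.val := P.jy_invj ⟨t, by omega⟩ j
  rw [h1, h2]
  omega

end PathData

namespace PathData
variable {k₀ l₀ : ℕ} (P : PathData k₀ l₀)

lemma Ky_lt_of {p q : P.Pt} (ht : p.1 = q.1) (hjy : P.jy p < P.jy q) :
    P.Ky p < P.Ky q := by
  unfold Ky
  rw [ht]
  have := (Nat.mul_lt_mul_right (show 0 < P.k+1 by omega)).mpr hjy
  omega

lemma ccol_mono : Monotone (fun i : Fin P.N => P.col (P.Ex.symm i).1.val) := by
  intro i i' h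
  have h1 : P.posx (P.Ex.symm i) ≤ P.posx (P.Ex.symm i') := by
    rw [P.posx_Ex_symm, P.posx_Ex_symm]; exact h
  exact P.Kx_col_le (P.posx_le_iff.mp h1)

lemma rrow_mono : Monotone (fun v : Fin P.N => P.row (P.Ey.symm v).1.val) := by
  intro i i' h
  have h1 : P.posy (P.Ey.symm i) ≤ P.posy (P.Ey.symm i') := by
    rw [P.posy_Ey_symm, P.posy_Ey_symm]; exact h
  exact P.Ky_row_le (P.posy_le_iff.mp h1)

lemma Ey_symm_perm (i : Fin P.N) : P.Ey.symm (P.perm i) = P.Ex.symm i := by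
  simp [perm]

end PathData

lemma mon_griddable {k₀ l₀ : ℕ} (M : Fin k₀ → Fin l₀ → Option Bool) (P : PathData k₀ l₀)
    (H1 : ∀ t₁, t₁ ≤ P.k → ∀ t₂, t₂ ≤ P.k → P.col t₁ = P.col t₂ → P.row t₁ = P.row t₂ → t₁ = t₂)
    (Hsg : ∀ t, t ≤ P.k → M (P.col t) (P.row t) = some (P.sg t)) :
    MonGriddable M P.perm := by
  classical
  refine ⟨fun i => P.col (P.Ex.symm i).1.val, fun v => P.row (P.Ey.symm v).1.val,
    P.ccol_mono, P.rrow_mono, ?_, ?_⟩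
  · intro i
    dsimp only
    rw [P.Ey_symm_perm]
    have := (P.Ex.symm i).1.isLt
    rw [Hsg _ (by omega)]
    simp
  · intro i j hij hc hr b hb
    dsimp only at hc hr hb
    rw [P.Ey_symm_perm] at hr hb
    rw [P.Ey_symm_perm] at hr
    set p := P.Ex.symm i with hp
    set q := P.Ex.symm j with hq
    have hp1 := p.1.isLt
    have hq1 := q.1.isLt
    have ht : p.1 = q.1 := Fin.ext (H1 _ (by omega) _ (by omega) hc hr)
    have hKx : P.Kx p < P.Kx q := by
      apply P.posx_lt_iff.mp
      rw [hp, hq, P.posx_Ex_symm, P.posx_Ex_symm]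
      exact hij
    unfold PathData.Kx at hKx
    rw [ht] at hKx
    have hj2 : p.2.val < q.2.val := by
      by_contra h'
      have : q.2.val * (P.k+1) ≤ p.2.val * (P.k+1) := Nat.mul_le_mul_right _ (by omega)
      omega
    have hsg : P.sg q.1.val = b := by
      have h1 := Hsg p.1.val (by omega)
      rw [hb] at h1
      rw [← ht]
      exact (Option.some_inj.mp h1).symm
    have hgoal1 : P.perm i = P.posy p := by rw [hp]; rfl
    have hgoal2 : P.perm j = P.posy q := by rw [hq]; rfl
    cases b with
    | true =>
      rw [if_pos rfl]
      rw [hgoal1, hgoal2]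
      apply P.posy_lt_iff.mpr
      apply P.Ky_lt_of ht
      unfold PathData.jy
      rw [ht, hsg]
      simpa using hj2
    | false =>
      rw [if_neg (by simp)]
      rw [hgoal1, hgoal2]
      apply P.posy_lt_iff.mpr
      apply P.Ky_lt_of ht.symm
      unfold PathData.jy
      rw [ht, hsg]
      have h2q := q.2.isLt
      have h2p := p.2.isLt
      simp only [Bool.false_eq_true, if_false]
      omega

lemma exists_gridTree {n : ℕ} (π : Equiv.Perm (Fin n)) (hn : 0 < n) :
    ∃ T, IsGridTree π T := by
  classical
  have hinj : Function.Injective (fun i : Fin n => (i, π i)) := by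
    intro a b h
    exact (Prod.ext_iff.mp h).1
  have hcard : (diagram π).card = n := by
    rw [diagram, Finset.card_image_of_injective _ hinj, Finset.card_univ, Fintype.card_fin]
  have hlen : (diagram π).toList.length = n := by
    rw [Finset.length_toList, hcard]
  rcases hl : (diagram π).toList with _ | ⟨a, l'⟩
  · rw [hl] at hlen; simp at hlen; omega
  · refine ⟨buildT a l', ?_, ?_⟩
    · rw [buildT_leafList, ← hl]
      exact Finset.nodup_toList _
    · rw [buildT_leafList, ← hl]
      exact Finset.toList_toFinset _

lemma le_gw_of_forall {n kk : ℕ} (π : Equiv.Perm (Fin n)) (hn : 0 < n)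
    (h : ∀ T, IsGridTree π T → kk ≤ 4 * treeGW T) : kk ≤ 4 * gw π := by
  obtain ⟨T, hT⟩ := exists_gridTree π hn
  have hne : {w | ∃ T, IsGridTree π T ∧ treeGW T = w}.Nonempty := ⟨treeGW T, T, hT, rfl⟩
  obtain ⟨T', hT', hw⟩ := Nat.sInf_mem hne
  rw [gw, ← hw]
  exact h T' hT'

lemma gridComplexity_le_treeGW {n : ℕ} {T t : PPM.GTree (Fin n × Fin n)}
    (h : t ∈ T.subtrees) :
    gridComplexity t.leafList.toFinset ≤ treeGW T := by
  apply le_foldr_max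
  exact List.mem_map_of_mem h

lemma card_filter_prod {mm K : ℕ} (pred : ℕ × Fin mm → Prop) [DecidablePred pred] :
    ((Finset.range K ×ˢ (Finset.univ : Finset (Fin mm))).filter pred).card
      = ∑ t ∈ Finset.range K, (Finset.univ.filter (fun j : Fin mm => pred (t, j))).card := by
  classical
  rw [Finset.card_eq_sum_card_fiberwise (f := Prod.fst) (t := Finset.range K)
    (fun p hp => (Finset.mem_product.mp (Finset.mem_filter.mp hp).1).1)]
  apply Finset.sum_congr rfl
  intro t ht
  apply Finset.card_bij' (i := fun (q : ℕ × Fin mm) _ => q.2) (j := fun j _ => (t, j))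
  · intro a ha
    simp only [Finset.mem_filter] at ha ⊢
    obtain ⟨⟨hmem, hpred⟩, hfst⟩ := ha
    refine ⟨Finset.mem_univ _, ?_⟩
    have : a = (t, a.2) := by rw [← hfst]
    rwa [← this]
  · intro j hj
    simp only [Finset.mem_filter] at hj
    have h1 : (t, j) ∈ Finset.range K ×ˢ (Finset.univ : Finset (Fin mm)) :=
      Finset.mem_product.mpr ⟨ht, Finset.mem_univ _⟩
    simp only [Finset.mem_filter]
    exact ⟨⟨h1, hj.2⟩, by simp⟩
  · intro a ha
    simp only [Finset.mem_filter] at ha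
    obtain ⟨⟨hmem, hpred⟩, hfst⟩ := ha
    rw [← hfst]
  · intro j hj
    rfl

lemma cols_le_switches {n : ℕ} (hn : 0 < n) (A : Finset (Fin n)) {γ : Type}
    [DecidableEq γ] [LinearOrder γ]
    (cc : Fin n → γ) (hcc : Monotone cc) (C : Finset γ)
    (hex : ∀ x ∈ C, ∃ i1 i2 : Fin n, i1 ∈ A ∧ i2 ∉ A ∧ cc i1 = x ∧ cc i2 = x) :
    C.card ≤ (Finset.univ.filter (fun q : Fin n => q ∈ A ∧
        ∃ h : q.val+1 < n, (⟨q.val+1, h⟩ : Fin n) ∉ A)).card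
      + (Finset.univ.filter (fun q : Fin n => q ∉ A ∧
        ∃ h : q.val+1 < n, (⟨q.val+1, h⟩ : Fin n) ∈ A)).card := by
  classical
  set SWd := Finset.univ.filter (fun q : Fin n => q ∈ A ∧
    ∃ h : q.val+1 < n, (⟨q.val+1, h⟩ : Fin n) ∉ A) with hSWd
  set SWa := Finset.univ.filter (fun q : Fin n => q ∉ A ∧
    ∃ h : q.val+1 < n, (⟨q.val+1, h⟩ : Fin n) ∈ A) with hSWa
  have hex2 : ∀ x ∈ C, ∃ qf : Fin n, qf ∈ SWd ∪ SWa ∧ cc qf = x := by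
    intro x hx
    obtain ⟨i1, i2, h1A, h2A, hc1, hc2⟩ := hex x hx
    have hne : i1 ≠ i2 := fun h => h2A (h ▸ h1A)
    rcases lt_or_gt_of_ne hne with hlt | hlt
    · obtain ⟨qn, hq1, hq2, hq3, hq4⟩ := exists_switch
        (fun q : ℕ => ∃ h : q < n, (⟨q, h⟩ : Fin n) ∈ A)
        (le_of_lt (Fin.lt_def.mp hlt)) ⟨i1.isLt, by simpa using h1A⟩
        (fun hc => h2A (by simpa using hc.2))
      have hqlt : qn < n := by have := i2.isLt; omega
      have hqlt1 : qn + 1 < n := by have := i2.isLt; omega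
      refine ⟨⟨qn, hqlt⟩, ?_, ?_⟩
      · apply Finset.mem_union_left
        rw [hSWd, Finset.mem_filter]
        refine ⟨Finset.mem_univ _, ?_, hqlt1, fun hm => hq4 ⟨hqlt1, hm⟩⟩
        obtain ⟨h, hm⟩ := hq3
        exact hm
      · have hm1 : cc i1 ≤ cc ⟨qn, hqlt⟩ := hcc (by rw [Fin.le_def]; simpa using hq1)
        have hm2 : cc ⟨qn, hqlt⟩ ≤ cc i2 := hcc (by rw [Fin.le_def]; simp; omega)
        rw [hc1] at hm1
        rw [hc2] at hm2
        exact le_antisymm hm2 hm1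
    · obtain ⟨qn, hq1, hq2, hq3, hq4⟩ := exists_switch
        (fun q : ℕ => ¬ ∃ h : q < n, (⟨q, h⟩ : Fin n) ∈ A)
        (le_of_lt (Fin.lt_def.mp hlt)) (fun hc => h2A (by simpa using hc.2))
        (fun hc => hc ⟨i1.isLt, by simpa using h1A⟩)
      have hqlt : qn < n := by have := i1.isLt; omega
      have hqlt1 : qn + 1 < n := by have := i1.isLt; omega
      refine ⟨⟨qn, hqlt⟩, ?_, ?_⟩
      · apply Finset.mem_union_right
        rw [hSWa, Finset.mem_filter]
        refine ⟨Finset.mem_univ _, fun hm => hq3 ⟨hqlt, hm⟩, hqlt1, ?_⟩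
        by_contra hnm
        exact hq4 (fun hc => hnm hc.2)
      · have hm1 : cc i2 ≤ cc ⟨qn, hqlt⟩ := hcc (by rw [Fin.le_def]; simpa using hq1)
        have hm2 : cc ⟨qn, hqlt⟩ ≤ cc i1 := hcc (by rw [Fin.le_def]; simp; omega)
        rw [hc2] at hm1
        rw [hc1] at hm2
        exact le_antisymm hm2 hm1
  set g : γ → Fin n := fun x =>
    if hx : ∃ qf : Fin n, qf ∈ SWd ∪ SWa ∧ cc qf = x then hx.choose else ⟨0, hn⟩ with hg
  have hinto : ∀ x ∈ C, g x ∈ SWd ∪ SWa := by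
    intro x hx
    rw [hg]
    dsimp only
    rw [dif_pos (hex2 x hx)]
    exact (hex2 x hx).choose_spec.1
  have hval : ∀ x ∈ C, cc (g x) = x := by
    intro x hx
    rw [hg]
    dsimp only
    rw [dif_pos (hex2 x hx)]
    exact (hex2 x hx).choose_spec.2
  have hinj : Set.InjOn g (C : Set γ) := by
    intro x hx y hy hxy
    rw [← hval x hx, ← hval y hy, hxy]
  exact le_trans (Finset.card_le_card_of_injOn g hinto hinj) (Finset.card_union_le _ _)

namespace PathData
variable {k₀ l₀ : ℕ} (P : PathData k₀ l₀)

def pnt (t : ℕ) (j : Fin (3*P.k+3)) : P.Pt :=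
  (⟨min t P.k, Nat.lt_succ_of_le (Nat.min_le_right t P.k)⟩, j)

lemma pnt_eq {t : ℕ} (h : t ≤ P.k) (j : Fin (3*P.k+3)) :
    P.pnt t j = (⟨t, by omega⟩, j) := by
  unfold pnt
  exact Prod.ext (Fin.ext (by simp [Nat.min_eq_left h])) rfl

lemma pnt_fst {t : ℕ} (h : t ≤ P.k) (j : Fin (3*P.k+3)) :
    (P.pnt t j).1.val = t := by
  rw [P.pnt_eq h]

lemma invj_injective (t : ℕ) : Function.Injective (P.invj t) := by
  intro a b h
  have := congrArg (P.invj t) h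
  rwa [P.invj_invj, P.invj_invj] at this

lemma card_invj_filter (t : ℕ) (pr : Fin (3*P.k+3) → Prop) [DecidablePred pr] :
    (Finset.univ.filter (fun j => pr (P.invj t j))).card
      = (Finset.univ.filter pr).card := by
  classical
  apply Finset.card_bij' (i := fun j _ => P.invj t j) (j := fun j _ => P.invj t j)
  · intro a ha
    simp only [Finset.mem_filter] at ha ⊢
    exact ⟨Finset.mem_univ _, ha.2⟩
  · intro a ha
    simp only [Finset.mem_filter] at ha ⊢
    refine ⟨Finset.mem_univ _, ?_⟩
    rw [P.invj_invj]
    exact ha.2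
  · intro a _; exact P.invj_invj t a
  · intro a _; exact P.invj_invj t a

end PathData

lemma gw_bound {k₀ l₀ : ℕ} (P : PathData k₀ l₀) (hk : 1 ≤ P.k)
    (H2 : ∀ t, t < P.k → P.col t = P.col (t+1) ∨ P.row t = P.row (t+1))
    (H4 : P.k + 2 ≤ ((Finset.range (P.k+1)).image P.col).card
        + ((Finset.range (P.k+1)).image P.row).card)
    (T : PPM.GTree (Fin P.N × Fin P.N)) (hT : IsGridTree P.perm T) :
    P.k ≤ 4 * treeGW T := by
  classical
  obtain ⟨hnodup, htofin⟩ := hT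
  have hNval : P.N = (P.k+1) * (3*P.k+3) := rfl
  have hN2 : 2 ≤ P.N := by
    rw [hNval]
    calc 2 ≤ 2 * 1 := by omega
      _ ≤ (P.k+1) * (3*P.k+3) := Nat.mul_le_mul (by omega) (by omega)
  have hinjd : Function.Injective (fun i : Fin P.N => (i, P.perm i)) :=
    fun a b h => (Prod.ext_iff.mp h).1
  have hdcard : (diagram P.perm).card = P.N := by
    rw [diagram, Finset.card_image_of_injective _ hinjd, Finset.card_univ, Fintype.card_fin]
  have hlen : T.leafList.length = P.N := by
    rw [← List.toFinset_card_of_nodup hnodup, htofin, hdcard]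
  obtain ⟨t₀, ht₀, hb1, hb2⟩ := exists_balanced hN2 T (by omega)
  set S' := t₀.leafList.toFinset with hS'
  have hsubl := leafList_sublist ht₀
  have hnodup' : t₀.leafList.Nodup := hsubl.nodup hnodup
  have hcardS' : S'.card = t₀.leafList.length := List.toFinset_card_of_nodup hnodup'
  have hS'sub : S' ⊆ diagram P.perm := by
    rw [hS', ← htofin]
    intro x hx
    rw [List.mem_toFinset] at hx ⊢
    exact hsubl.subset hx
  set A := S'.image Prod.fst with hA
  set Ay := S'.image Prod.snd with hAy
  -- membership bridges
  have hdiag : ∀ z : Fin P.N × Fin P.N, z ∈ S' → z.2 = P.perm z.1 := by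
    intro z hz
    have hz' := hS'sub hz
    rw [diagram, Finset.mem_image] at hz'
    obtain ⟨i, _, hi⟩ := hz'
    rw [← hi]
  have hmemA : ∀ i : Fin P.N, i ∈ A ↔ (i, P.perm i) ∈ S' := by
    intro i
    constructor
    · intro hi
      rw [hA, Finset.mem_image] at hi
      obtain ⟨z, hz, hz1⟩ := hi
      have h2 := hdiag z hz
      have hze : z = (i, P.perm i) := by
        rw [← hz1]
        exact Prod.ext rfl (by rw [h2, hz1])
      rwa [← hze]
    · intro hi
      rw [hA]
      exact Finset.mem_image_of_mem _ hi
  have hmemAy : ∀ i : Fin P.N, P.perm i ∈ Ay ↔ (i, P.perm i) ∈ S' := by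
    intro i
    constructor
    · intro hi
      rw [hAy, Finset.mem_image] at hi
      obtain ⟨z, hz, hz1⟩ := hi
      have h2 := hdiag z hz
      have hz1' : P.perm z.1 = P.perm i := by rw [← h2, hz1]
      have hze : z = (i, P.perm i) := by
        have : z.1 = i := P.perm.injective hz1'
        exact Prod.ext this (by rw [h2, this])
      rwa [← hze]
    · intro hi
      rw [hAy]
      exact Finset.mem_image_of_mem _ hi
  have hbridge : ∀ p : P.Pt, P.posy p ∈ Ay ↔ P.posx p ∈ A := by
    intro p
    have h1 : P.perm (P.posx p) = P.posy p := P.perm_posx p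
    rw [← h1, hmemAy, hmemA]
  -- the point set and cell counts
  set QQ := Finset.univ.filter (fun p : P.Pt => P.posx p ∈ A) with hQQ
  have hQmem : ∀ p : P.Pt, p ∈ QQ ↔ P.posx p ∈ A := by
    intro p
    rw [hQQ, Finset.mem_filter]
    simp
  have hQA : A = QQ.image P.posx := by
    ext i
    simp only [Finset.mem_image]
    constructor
    · intro hi
      exact ⟨P.Ex.symm i, (hQmem _).mpr (by rwa [P.posx_Ex_symm]), P.posx_Ex_symm i⟩
    · rintro ⟨p, hp, rfl⟩
      exact (hQmem p).mp hp
  have hcardQ : QQ.card = A.card := by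
    rw [hQA, Finset.card_image_of_injective _ P.posx_inj]
  have hcardA : A.card = S'.card := by
    rw [hA]
    apply Finset.card_image_of_injOn
    intro z hz z' hz' h
    exact Prod.ext h (by rw [hdiag z hz, hdiag z' hz', h])
  set acnt : ℕ → ℕ :=
    fun t => (Finset.univ.filter (fun j : Fin (3*P.k+3) => P.pnt t j ∈ QQ)).card with hacnt
  have hacnt_app : ∀ t, acnt t
      = (Finset.univ.filter (fun j : Fin (3*P.k+3) => P.pnt t j ∈ QQ)).card :=
    fun t => by rw [hacnt]
  have hsum : ∑ t ∈ Finset.range (P.k+1), acnt t = QQ.card := by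
    rw [Finset.card_eq_sum_card_fiberwise (f := fun p : P.Pt => (p.1.val : ℕ))
      (t := Finset.range (P.k+1)) (fun p _ => Finset.mem_range.mpr p.1.isLt)]
    apply Finset.sum_congr rfl
    intro t ht
    rw [Finset.mem_range] at ht
    have htk : t ≤ P.k := by omega
    rw [hacnt_app]
    apply Finset.card_bij' (i := fun j _ => P.pnt t j) (j := fun p _ => p.2)
    · intro j hj
      simp only [Finset.mem_filter] at hj ⊢
      exact ⟨hj.2, P.pnt_fst htk j⟩
    · intro p hp
      simp only [Finset.mem_filter] at hp ⊢
      refine ⟨Finset.mem_univ _, ?_⟩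
      have hpe : P.pnt t p.2 = p := by
        rw [P.pnt_eq htk]
        exact Prod.ext (Fin.ext hp.2.symm) rfl
      rw [hpe]
      exact hp.1
    · intro j _
      rw [P.pnt_eq htk]
    · intro p hp
      simp only [Finset.mem_filter] at hp
      rw [P.pnt_eq htk]
      exact Prod.ext (Fin.ext hp.2.symm) rfl
  -- main inequality
  suffices hfin : P.k ≤ 2 * PPM.intervalicity A + 2 * PPM.intervalicity Ay by
    have hgc : PPM.gridComplexity S' = max (PPM.intervalicity A) (PPM.intervalicity Ay) := rfl
    have hle := gridComplexity_le_treeGW ht₀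
    rw [← hS'] at hle
    have h1 : PPM.intervalicity A ≤ max (PPM.intervalicity A) (PPM.intervalicity Ay) :=
      le_max_left _ _
    have h2 : PPM.intervalicity Ay ≤ max (PPM.intervalicity A) (PPM.intervalicity Ay) :=
      le_max_right _ _
    omega
  by_cases hcase : P.k ≤ ∑ t ∈ Finset.range P.k, Nat.dist (acnt t) (acnt (t+1))
  · -- CASE A: large total variation
    set pr1 : ℕ × Fin (3*P.k+3) → Prop := fun q =>
      P.col q.1 = P.col (q.1+1) ∧ P.pnt q.1 q.2 ∈ QQ ∧ P.pnt (q.1+1) q.2 ∉ QQ with hpr1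
    set pr2 : ℕ × Fin (3*P.k+3) → Prop := fun q =>
      P.col q.1 = P.col (q.1+1) ∧ P.pnt q.1 q.2 ∉ QQ ∧ P.pnt (q.1+1) q.2 ∈ QQ with hpr2
    set pr3 : ℕ × Fin (3*P.k+3) → Prop := fun q =>
      ¬ (P.col q.1 = P.col (q.1+1)) ∧ P.pnt q.1 (P.invj q.1 q.2) ∈ QQ
        ∧ P.pnt (q.1+1) (P.invj (q.1+1) q.2) ∉ QQ with hpr3
    set pr4 : ℕ × Fin (3*P.k+3) → Prop := fun q =>
      ¬ (P.col q.1 = P.col (q.1+1)) ∧ P.pnt q.1 (P.invj q.1 q.2) ∉ QQ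
        ∧ P.pnt (q.1+1) (P.invj (q.1+1) q.2) ∈ QQ with hpr4
    set W1 := (Finset.range P.k ×ˢ (Finset.univ : Finset (Fin (3*P.k+3)))).filter pr1 with hW1
    set W2 := (Finset.range P.k ×ˢ (Finset.univ : Finset (Fin (3*P.k+3)))).filter pr2 with hW2
    set W3 := (Finset.range P.k ×ˢ (Finset.univ : Finset (Fin (3*P.k+3)))).filter pr3 with hW3
    set W4 := (Finset.range P.k ×ˢ (Finset.univ : Finset (Fin (3*P.k+3)))).filter pr4 with hW4
    have hsumW : ∑ t ∈ Finset.range P.k, Nat.dist (acnt t) (acnt (t+1))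
        ≤ W1.card + W2.card + W3.card + W4.card := by
      rw [hW1, hW2, hW3, hW4, card_filter_prod pr1, card_filter_prod pr2,
        card_filter_prod pr3, card_filter_prod pr4]
      simp only [← Finset.sum_add_distrib]
      apply Finset.sum_le_sum
      intro t ht
      rw [Finset.mem_range] at ht
      simp only [hpr1, hpr2, hpr3, hpr4]
      by_cases hcol : P.col t = P.col (t+1)
      · -- column edge: use x-axis witnesses
        set Jt := Finset.univ.filter (fun j : Fin (3*P.k+3) => P.pnt t j ∈ QQ) with hJt
        set Jt1 := Finset.univ.filter (fun j : Fin (3*P.k+3) => P.pnt (t+1) j ∈ QQ) with hJt1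
        have hf1 : (Finset.univ.filter (fun j : Fin (3*P.k+3) =>
            P.col t = P.col (t+1) ∧ P.pnt t j ∈ QQ ∧ P.pnt (t+1) j ∉ QQ)) = Jt \ Jt1 := by
          ext j
          simp only [Finset.mem_filter, Finset.mem_sdiff, hJt, hJt1, Finset.mem_univ,
            true_and, hcol]
          try tauto
        have hf2 : (Finset.univ.filter (fun j : Fin (3*P.k+3) =>
            P.col t = P.col (t+1) ∧ P.pnt t j ∉ QQ ∧ P.pnt (t+1) j ∈ QQ)) = Jt1 \ Jt := by
          ext j
          simp only [Finset.mem_filter, Finset.mem_sdiff, hJt, hJt1, Finset.mem_univ,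
            true_and, hcol]
          try tauto
        have d1 := Finset.card_sdiff_add_card_inter Jt Jt1
        have d2 := Finset.card_sdiff_add_card_inter Jt1 Jt
        rw [Finset.inter_comm] at d2
        have hat : acnt t = Jt.card := by rw [hacnt_app, hJt]
        have hat1 : acnt (t+1) = Jt1.card := by rw [hacnt_app, hJt1]
        rw [hf1, hf2, hat, hat1]
        simp only [Nat.dist]
        omega
      · -- row edge: use y-axis witnesses
        have hrow : P.row t = P.row (t+1) := by
          rcases H2 t ht with h | h
          · exact absurd h hcol
          · exact h
        set Jt := Finset.univ.filter
          (fun j : Fin (3*P.k+3) => P.pnt t (P.invj t j) ∈ QQ) with hJt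
        set Jt1 := Finset.univ.filter
          (fun j : Fin (3*P.k+3) => P.pnt (t+1) (P.invj (t+1) j) ∈ QQ) with hJt1
        have hf1 : (Finset.univ.filter (fun j : Fin (3*P.k+3) =>
            P.col t = P.col (t+1) ∧ P.pnt t j ∈ QQ ∧ P.pnt (t+1) j ∉ QQ)) = ∅ :=
          Finset.filter_false_of_mem (fun j _ h => hcol h.1)
        have hf2 : (Finset.univ.filter (fun j : Fin (3*P.k+3) =>
            P.col t = P.col (t+1) ∧ P.pnt t j ∉ QQ ∧ P.pnt (t+1) j ∈ QQ)) = ∅ :=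
          Finset.filter_false_of_mem (fun j _ h => hcol h.1)
        have hf3 : (Finset.univ.filter (fun j : Fin (3*P.k+3) =>
            ¬ (P.col t = P.col (t+1)) ∧ P.pnt t (P.invj t j) ∈ QQ
              ∧ P.pnt (t+1) (P.invj (t+1) j) ∉ QQ)) = Jt \ Jt1 := by
          ext j
          simp only [Finset.mem_filter, Finset.mem_sdiff, hJt, hJt1, Finset.mem_univ,
            true_and, hcol, not_false_eq_true]
          try tauto
        have hf4 : (Finset.univ.filter (fun j : Fin (3*P.k+3) =>
            ¬ (P.col t = P.col (t+1)) ∧ P.pnt t (P.invj t j) ∉ QQ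
              ∧ P.pnt (t+1) (P.invj (t+1) j) ∈ QQ)) = Jt1 \ Jt := by
          ext j
          simp only [Finset.mem_filter, Finset.mem_sdiff, hJt, hJt1, Finset.mem_univ,
            true_and, hcol, not_false_eq_true]
          try tauto
        have d1 := Finset.card_sdiff_add_card_inter Jt Jt1
        have d2 := Finset.card_sdiff_add_card_inter Jt1 Jt
        rw [Finset.inter_comm] at d2
        have hat : acnt t = Jt.card := by
          rw [hacnt_app, hJt, P.card_invj_filter t (fun j => P.pnt t j ∈ QQ)]
        have hat1 : acnt (t+1) = Jt1.card := by
          rw [hacnt_app, hJt1, P.card_invj_filter (t+1) (fun j => P.pnt (t+1) j ∈ QQ)]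
        rw [hf1, hf2, hf3, hf4, hat, hat1]
        simp only [Nat.dist, Finset.card_empty]
        omega
    -- bound each witness set by an intervalicity
    have hW1le : W1.card ≤ PPM.intervalicity A := by
      have hinjW : Set.InjOn (fun q : ℕ × Fin (3*P.k+3) => P.posx (P.pnt q.1 q.2))
          (W1 : Set (ℕ × Fin (3*P.k+3))) := by
        intro q hq q' hq' h
        simp only [Finset.coe_filter, Set.mem_setOf_eq, hW1] at hq hq'
        have hk1 : q.1 < P.k := Finset.mem_range.mp (Finset.mem_product.mp hq.1).1
        have hk2 : q'.1 < P.k := Finset.mem_range.mp (Finset.mem_product.mp hq'.1).1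
        have hpp := P.posx_inj h
        have h1 : q.1 = q'.1 := by
          have h2 := congrArg (fun z : P.Pt => z.1.val) hpp
          rwa [P.pnt_fst (by omega), P.pnt_fst (by omega)] at h2
        have h2 : q.2 = q'.2 := congrArg (Prod.snd : P.Pt → Fin (3*P.k+3)) hpp
        exact Prod.ext h1 h2
      rw [← Finset.card_image_of_injOn hinjW]
      apply card_desc_le A
      intro xq hxq
      rw [Finset.mem_image] at hxq
      obtain ⟨q, hq, rfl⟩ := hxq
      rw [hW1, Finset.mem_filter, hpr1] at hq
      obtain ⟨hmem, hcol, hin, hout⟩ := hq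
      have hk1 : q.1 < P.k := Finset.mem_range.mp (Finset.mem_product.mp hmem).1
      constructor
      · exact (hQmem _).mp hin
      · refine ⟨P.posx (P.pnt (q.1+1) q.2), ?_, fun hm2 => hout ((hQmem _).mpr hm2)⟩
        apply P.posx_succ
        rw [P.pnt_eq (show q.1+1 ≤ P.k by omega), P.pnt_eq (show q.1 ≤ P.k by omega)]
        exact P.Kx_succ (by omega) hcol.symm q.2
    have hW2le : W2.card ≤ PPM.intervalicity A := by
      have hinjW : Set.InjOn (fun q : ℕ × Fin (3*P.k+3) => P.posx (P.pnt q.1 q.2))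
          (W2 : Set (ℕ × Fin (3*P.k+3))) := by
        intro q hq q' hq' h
        simp only [Finset.coe_filter, Set.mem_setOf_eq, hW2] at hq hq'
        have hk1 : q.1 < P.k := Finset.mem_range.mp (Finset.mem_product.mp hq.1).1
        have hk2 : q'.1 < P.k := Finset.mem_range.mp (Finset.mem_product.mp hq'.1).1
        have hpp := P.posx_inj h
        have h1 : q.1 = q'.1 := by
          have h2 := congrArg (fun z : P.Pt => z.1.val) hpp
          rwa [P.pnt_fst (by omega), P.pnt_fst (by omega)] at h2
        have h2 : q.2 = q'.2 := congrArg (Prod.snd : P.Pt → Fin (3*P.k+3)) hpp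
        exact Prod.ext h1 h2
      rw [← Finset.card_image_of_injOn hinjW]
      apply card_asc_le A
      intro xq hxq
      rw [Finset.mem_image] at hxq
      obtain ⟨q, hq, rfl⟩ := hxq
      rw [hW2, Finset.mem_filter, hpr2] at hq
      obtain ⟨hmem, hcol, hout, hin⟩ := hq
      have hk1 : q.1 < P.k := Finset.mem_range.mp (Finset.mem_product.mp hmem).1
      constructor
      · exact fun hm2 => hout ((hQmem _).mpr hm2)
      · refine ⟨P.posx (P.pnt (q.1+1) q.2), ?_, (hQmem _).mp hin⟩
        apply P.posx_succ
        rw [P.pnt_eq (show q.1+1 ≤ P.k by omega), P.pnt_eq (show q.1 ≤ P.k by omega)]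
        exact P.Kx_succ (by omega) hcol.symm q.2
    have hW3le : W3.card ≤ PPM.intervalicity Ay := by
      have hinjW : Set.InjOn
          (fun q : ℕ × Fin (3*P.k+3) => P.posy (P.pnt q.1 (P.invj q.1 q.2)))
          (W3 : Set (ℕ × Fin (3*P.k+3))) := by
        intro q hq q' hq' h
        simp only [Finset.coe_filter, Set.mem_setOf_eq, hW3] at hq hq'
        have hk1 : q.1 < P.k := Finset.mem_range.mp (Finset.mem_product.mp hq.1).1
        have hk2 : q'.1 < P.k := Finset.mem_range.mp (Finset.mem_product.mp hq'.1).1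
        have hpp := P.posy_inj h
        have h1 : q.1 = q'.1 := by
          have h2 := congrArg (fun z : P.Pt => z.1.val) hpp
          rwa [P.pnt_fst (by omega), P.pnt_fst (by omega)] at h2
        have h2 : q.2 = q'.2 := by
          have h3 := congrArg (Prod.snd : P.Pt → Fin (3*P.k+3)) hpp
          rw [h1] at h3
          exact P.invj_injective q'.1 h3
        exact Prod.ext h1 h2
      rw [← Finset.card_image_of_injOn hinjW]
      apply card_desc_le Ay
      intro xq hxq
      rw [Finset.mem_image] at hxq
      obtain ⟨q, hq, rfl⟩ := hxq
      rw [hW3, Finset.mem_filter, hpr3] at hq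
      obtain ⟨hmem, hncol, hin, hout⟩ := hq
      have hk1 : q.1 < P.k := Finset.mem_range.mp (Finset.mem_product.mp hmem).1
      have hrow : P.row q.1 = P.row (q.1+1) := by
        rcases H2 q.1 hk1 with h | h
        · exact absurd h hncol
        · exact h
      constructor
      · exact (hbridge _).mpr ((hQmem _).mp hin)
      · refine ⟨P.posy (P.pnt (q.1+1) (P.invj (q.1+1) q.2)), ?_, ?_⟩
        · apply P.posy_succ
          rw [P.pnt_eq (show q.1+1 ≤ P.k by omega), P.pnt_eq (show q.1 ≤ P.k by omega)]
          exact P.Ky_succ (by omega) hrow.symm q.2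
        · intro hm2
          exact hout ((hQmem _).mpr ((hbridge _).mp hm2))
    have hW4le : W4.card ≤ PPM.intervalicity Ay := by
      have hinjW : Set.InjOn
          (fun q : ℕ × Fin (3*P.k+3) => P.posy (P.pnt q.1 (P.invj q.1 q.2)))
          (W4 : Set (ℕ × Fin (3*P.k+3))) := by
        intro q hq q' hq' h
        simp only [Finset.coe_filter, Set.mem_setOf_eq, hW4] at hq hq'
        have hk1 : q.1 < P.k := Finset.mem_range.mp (Finset.mem_product.mp hq.1).1
        have hk2 : q'.1 < P.k := Finset.mem_range.mp (Finset.mem_product.mp hq'.1).1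
        have hpp := P.posy_inj h
        have h1 : q.1 = q'.1 := by
          have h2 := congrArg (fun z : P.Pt => z.1.val) hpp
          rwa [P.pnt_fst (by omega), P.pnt_fst (by omega)] at h2
        have h2 : q.2 = q'.2 := by
          have h3 := congrArg (Prod.snd : P.Pt → Fin (3*P.k+3)) hpp
          rw [h1] at h3
          exact P.invj_injective q'.1 h3
        exact Prod.ext h1 h2
      rw [← Finset.card_image_of_injOn hinjW]
      apply card_asc_le Ay
      intro xq hxq
      rw [Finset.mem_image] at hxq
      obtain ⟨q, hq, rfl⟩ := hxq
      rw [hW4, Finset.mem_filter, hpr4] at hq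
      obtain ⟨hmem, hncol, hout, hin⟩ := hq
      have hk1 : q.1 < P.k := Finset.mem_range.mp (Finset.mem_product.mp hmem).1
      have hrow : P.row q.1 = P.row (q.1+1) := by
        rcases H2 q.1 hk1 with h | h
        · exact absurd h hncol
        · exact h
      constructor
      · exact fun hm2 => hout ((hQmem _).mpr ((hbridge _).mp hm2))
      · refine ⟨P.posy (P.pnt (q.1+1) (P.invj (q.1+1) q.2)), ?_, ?_⟩
        · apply P.posy_succ
          rw [P.pnt_eq (show q.1+1 ≤ P.k by omega), P.pnt_eq (show q.1 ≤ P.k by omega)]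
          exact P.Ky_succ (by omega) hrow.symm q.2
        · exact (hbridge _).mpr ((hQmem _).mp hin)
    omega
  · -- CASE B: small total variation, all cells are partial
    push_neg at hcase
    have htele : ∀ t1, t1 ≤ P.k → ∀ t2, t2 ≤ P.k →
        Nat.dist (acnt t1) (acnt t2)
          ≤ ∑ t ∈ Finset.range P.k, Nat.dist (acnt t) (acnt (t+1)) := by
      have haux : ∀ t1 t2, t1 ≤ t2 → t2 ≤ P.k →
          Nat.dist (acnt t1) (acnt t2)
            ≤ ∑ t ∈ Finset.range P.k, Nat.dist (acnt t) (acnt (t+1)) := by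
        intro t1 t2 h12 h2k
        refine le_trans (dist_le_sum acnt t1 t2 h12) ?_
        apply Finset.sum_le_sum_of_subset
        intro x hx
        rw [Finset.mem_Ico] at hx
        rw [Finset.mem_range]
        omega
      intro t1 h1 t2 h2
      rcases le_total t1 t2 with h | h
      · exact haux t1 t2 h h2
      · rw [Nat.dist_comm]
        exact haux t2 t1 h h1
    have hStot1 : P.N < 3 * ∑ t ∈ Finset.range (P.k+1), acnt t := by
      rw [hsum, hcardQ, hcardA, hcardS']
      omega
    have hStot2 : 3 * ∑ t ∈ Finset.range (P.k+1), acnt t ≤ 2 * P.N := by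
      rw [hsum, hcardQ, hcardA, hcardS']
      omega
    have hmax : ∃ t, t ≤ P.k ∧ P.k+1 ≤ acnt t := by
      by_contra h
      push_neg at h
      have hle : ∑ t ∈ Finset.range (P.k+1), acnt t ≤ (P.k+1) * P.k := by
        calc ∑ t ∈ Finset.range (P.k+1), acnt t
            ≤ (Finset.range (P.k+1)).card • P.k := by
              apply Finset.sum_le_card_nsmul
              intro t ht
              rw [Finset.mem_range] at ht
              have := h t (by omega)
              omega
          _ = (P.k+1) * P.k := by rw [Finset.card_range, smul_eq_mul]
      have hr : (P.k+1)*(3*P.k+3) = 3*((P.k+1)*P.k) + 3*P.k+3 := by ring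
      rw [hNval] at hStot1
      omega
    have hmin : ∃ t, t ≤ P.k ∧ acnt t ≤ 2*P.k+2 := by
      by_contra h
      push_neg at h
      have hle : (P.k+1) * (2*P.k+3) ≤ ∑ t ∈ Finset.range (P.k+1), acnt t := by
        calc (P.k+1) * (2*P.k+3) = (Finset.range (P.k+1)).card • (2*P.k+3) := by
              rw [Finset.card_range, smul_eq_mul]
          _ ≤ ∑ t ∈ Finset.range (P.k+1), acnt t := by
              apply Finset.card_nsmul_le_sum
              intro t ht
              rw [Finset.mem_range] at ht
              have := h t (by omega)
              omega
      have hr : (P.k+1)*(2*P.k+3) = 2*((P.k+1)*P.k) + 3*P.k+3 := by ring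
      have hr2 : (P.k+1)*(3*P.k+3) = 3*((P.k+1)*P.k) + 3*P.k+3 := by ring
      rw [hNval] at hStot2
      omega
    obtain ⟨tmax, htmax, hamax⟩ := hmax
    obtain ⟨tmin, htmin, hamin⟩ := hmin
    have hpart : ∀ t, t ≤ P.k → 1 ≤ acnt t ∧ acnt t < 3*P.k+3 := by
      intro t ht
      have d1 := htele tmax htmax t ht
      have d2 := htele tmin htmin t ht
      have d1' : acnt tmax - acnt t + (acnt t - acnt tmax)
          ≤ ∑ x ∈ Finset.range P.k, Nat.dist (acnt x) (acnt (x+1)) := d1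
      have d2' : acnt tmin - acnt t + (acnt t - acnt tmin)
          ≤ ∑ x ∈ Finset.range P.k, Nat.dist (acnt x) (acnt (x+1)) := d2
      omega
    have hNpos : 0 < P.N := by omega
    -- columns
    have hcols : ((Finset.range (P.k+1)).image P.col).card
        ≤ (Finset.univ.filter (fun q : Fin P.N => q ∈ A ∧
            ∃ h : q.val+1 < P.N, (⟨q.val+1, h⟩ : Fin P.N) ∉ A)).card
          + (Finset.univ.filter (fun q : Fin P.N => q ∉ A ∧
            ∃ h : q.val+1 < P.N, (⟨q.val+1, h⟩ : Fin P.N) ∈ A)).card := by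
      apply cols_le_switches hNpos A (fun i => P.col (P.Ex.symm i).1.val) P.ccol_mono
      intro x hx
      rw [Finset.mem_image] at hx
      obtain ⟨t, ht, rfl⟩ := hx
      rw [Finset.mem_range] at ht
      have htk : t ≤ P.k := by omega
      obtain ⟨h1, h2⟩ := hpart t htk
      have hne : (Finset.univ.filter (fun j : Fin (3*P.k+3) => P.pnt t j ∈ QQ)).Nonempty := by
        apply Finset.card_pos.mp
        rw [← hacnt_app]
        omega
      obtain ⟨j1, hj1⟩ := hne
      have hj1Q : P.pnt t j1 ∈ QQ := (Finset.mem_filter.mp hj1).2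
      have hne2 : ∃ j2 : Fin (3*P.k+3), P.pnt t j2 ∉ QQ := by
        by_contra hall
        push_neg at hall
        have heq : (Finset.univ.filter (fun j : Fin (3*P.k+3) => P.pnt t j ∈ QQ))
            = Finset.univ := Finset.filter_true_of_mem (fun j _ => hall j)
        have : acnt t = 3*P.k+3 := by
          rw [hacnt_app, heq, Finset.card_univ, Fintype.card_fin]
        omega
      obtain ⟨j2, hj2⟩ := hne2
      refine ⟨P.posx (P.pnt t j1), P.posx (P.pnt t j2),
        (hQmem _).mp hj1Q, fun h => hj2 ((hQmem _).mpr h), ?_, ?_⟩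
      · rw [P.Ex_symm_posx, P.pnt_fst htk]
      · rw [P.Ex_symm_posx, P.pnt_fst htk]
    -- rows
    have hrows : ((Finset.range (P.k+1)).image P.row).card
        ≤ (Finset.univ.filter (fun q : Fin P.N => q ∈ Ay ∧
            ∃ h : q.val+1 < P.N, (⟨q.val+1, h⟩ : Fin P.N) ∉ Ay)).card
          + (Finset.univ.filter (fun q : Fin P.N => q ∉ Ay ∧
            ∃ h : q.val+1 < P.N, (⟨q.val+1, h⟩ : Fin P.N) ∈ Ay)).card := by
      apply cols_le_switches hNpos Ay (fun v => P.row (P.Ey.symm v).1.val) P.rrow_mono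
      intro x hx
      rw [Finset.mem_image] at hx
      obtain ⟨t, ht, rfl⟩ := hx
      rw [Finset.mem_range] at ht
      have htk : t ≤ P.k := by omega
      obtain ⟨h1, h2⟩ := hpart t htk
      have hne : (Finset.univ.filter (fun j : Fin (3*P.k+3) => P.pnt t j ∈ QQ)).Nonempty := by
        apply Finset.card_pos.mp
        rw [← hacnt_app]
        omega
      obtain ⟨j1, hj1⟩ := hne
      have hj1Q : P.pnt t j1 ∈ QQ := (Finset.mem_filter.mp hj1).2
      have hne2 : ∃ j2 : Fin (3*P.k+3), P.pnt t j2 ∉ QQ := by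
        by_contra hall
        push_neg at hall
        have heq : (Finset.univ.filter (fun j : Fin (3*P.k+3) => P.pnt t j ∈ QQ))
            = Finset.univ := Finset.filter_true_of_mem (fun j _ => hall j)
        have : acnt t = 3*P.k+3 := by
          rw [hacnt_app, heq, Finset.card_univ, Fintype.card_fin]
        omega
      obtain ⟨j2, hj2⟩ := hne2
      refine ⟨P.posy (P.pnt t j1), P.posy (P.pnt t j2),
        (hbridge _).mpr ((hQmem _).mp hj1Q),
        fun h => hj2 ((hQmem _).mpr ((hbridge _).mp h)), ?_, ?_⟩
      · rw [P.Ey_symm_posy, P.pnt_fst htk]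
      · rw [P.Ey_symm_posy, P.pnt_fst htk]
    -- bound the switch sets by intervalicities
    have hd1 : (Finset.univ.filter (fun q : Fin P.N => q ∈ A ∧
        ∃ h : q.val+1 < P.N, (⟨q.val+1, h⟩ : Fin P.N) ∉ A)).card ≤ PPM.intervalicity A := by
      apply card_desc_le A
      intro q hq
      rw [Finset.mem_filter] at hq
      obtain ⟨-, hqA, h, hnot⟩ := hq
      exact ⟨hqA, ⟨⟨q.val+1, h⟩, rfl, hnot⟩⟩
    have hd2 : (Finset.univ.filter (fun q : Fin P.N => q ∉ A ∧
        ∃ h : q.val+1 < P.N, (⟨q.val+1, h⟩ : Fin P.N) ∈ A)).card ≤ PPM.intervalicity A := by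
      apply card_asc_le A
      intro q hq
      rw [Finset.mem_filter] at hq
      obtain ⟨-, hqA, h, hmem⟩ := hq
      exact ⟨hqA, ⟨⟨q.val+1, h⟩, rfl, hmem⟩⟩
    have hd3 : (Finset.univ.filter (fun q : Fin P.N => q ∈ Ay ∧
        ∃ h : q.val+1 < P.N, (⟨q.val+1, h⟩ : Fin P.N) ∉ Ay)).card ≤ PPM.intervalicity Ay := by
      apply card_desc_le Ay
      intro q hq
      rw [Finset.mem_filter] at hq
      obtain ⟨-, hqA, h, hnot⟩ := hq
      exact ⟨hqA, ⟨⟨q.val+1, h⟩, rfl, hnot⟩⟩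
    have hd4 : (Finset.univ.filter (fun q : Fin P.N => q ∉ Ay ∧
        ∃ h : q.val+1 < P.N, (⟨q.val+1, h⟩ : Fin P.N) ∈ Ay)).card ≤ PPM.intervalicity Ay := by
      apply card_asc_le Ay
      intro q hq
      rw [Finset.mem_filter] at hq
      obtain ⟨-, hqA, h, hmem⟩ := hq
      exact ⟨hqA, ⟨⟨q.val+1, h⟩, rfl, hmem⟩⟩
    omega

lemma getVert_injOn {V : Type} {G : SimpleGraph V} :
    ∀ {u v : V} (w : G.Walk u v), w.IsPath →
    ∀ i j, i ≤ w.length → j ≤ w.length → w.getVert i = w.getVert j → i = j := by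
  intro u v w
  induction w with
  | nil =>
    intro _ i j hi hj _
    simp only [SimpleGraph.Walk.length_nil] at hi hj
    omega
  | @cons a b c hadj p IH =>
    intro hp i j hi hj hij
    rw [SimpleGraph.Walk.length_cons] at hi hj
    rw [SimpleGraph.Walk.cons_isPath_iff] at hp
    match i, j with
    | 0, 0 => rfl
    | 0, (j+1) =>
      exfalso
      apply hp.2
      rw [SimpleGraph.Walk.mem_support_iff_exists_getVert]
      refine ⟨j, ?_, by omega⟩
      have h0 : (SimpleGraph.Walk.cons hadj p).getVert 0 = a := rfl
      have h1 : (SimpleGraph.Walk.cons hadj p).getVert (j+1) = p.getVert j :=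
        SimpleGraph.Walk.getVert_cons_succ _ _
      rw [h0, h1] at hij
      exact hij.symm
    | (i+1), 0 =>
      exfalso
      apply hp.2
      rw [SimpleGraph.Walk.mem_support_iff_exists_getVert]
      refine ⟨i, ?_, by omega⟩
      have h0 : (SimpleGraph.Walk.cons hadj p).getVert 0 = a := rfl
      have h1 : (SimpleGraph.Walk.cons hadj p).getVert (i+1) = p.getVert i :=
        SimpleGraph.Walk.getVert_cons_succ _ _
      rw [h0, h1] at hij
      exact hij
    | (i+1), (j+1) =>
      have h1 : (SimpleGraph.Walk.cons hadj p).getVert (i+1) = p.getVert i :=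
        SimpleGraph.Walk.getVert_cons_succ _ _
      have h2 : (SimpleGraph.Walk.cons hadj p).getVert (j+1) = p.getVert j :=
        SimpleGraph.Walk.getVert_cons_succ _ _
      rw [h1, h2] at hij
      have := IH hp.1 i j (by omega) (by omega) hij
      omega

lemma edge_loc {V : Type} {G : SimpleGraph V} :
    ∀ {u v : V} (w : G.Walk u v) {a b : V}, s(a,b) ∈ w.edges →
    ∃ i, i < w.length ∧ ((w.getVert i = a ∧ w.getVert (i+1) = b) ∨
      (w.getVert i = b ∧ w.getVert (i+1) = a)) := by
  intro u v w
  induction w with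
  | nil =>
    intro a b h
    simp [SimpleGraph.Walk.edges_nil] at h
  | @cons u x v hadj p IH =>
    intro a b h
    rw [SimpleGraph.Walk.edges_cons, List.mem_cons] at h
    rcases h with h | h
    · rw [Sym2.eq_iff] at h
      refine ⟨0, by simp [SimpleGraph.Walk.length_cons], ?_⟩
      have h0 : (SimpleGraph.Walk.cons hadj p).getVert 0 = u := rfl
      have h1 : (SimpleGraph.Walk.cons hadj p).getVert 1 = x := by
        rw [SimpleGraph.Walk.getVert_cons_succ _ _]
        exact SimpleGraph.Walk.getVert_zero p
      rcases h with ⟨rfl, rfl⟩ | ⟨rfl, rfl⟩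
      · exact Or.inl ⟨h0, h1⟩
      · exact Or.inr ⟨h0, h1⟩
    · obtain ⟨i, hi, ho⟩ := IH h
      refine ⟨i+1, by rw [SimpleGraph.Walk.length_cons]; omega, ?_⟩
      have h1 : (SimpleGraph.Walk.cons hadj p).getVert (i+1) = p.getVert i :=
        SimpleGraph.Walk.getVert_cons_succ _ _
      have h2 : (SimpleGraph.Walk.cons hadj p).getVert (i+1+1) = p.getVert (i+1) :=
        SimpleGraph.Walk.getVert_cons_succ _ _
      rw [h1, h2]
      exact ho

end PPMProof

/-- if the cell graph of a monotone gridding matrix is a path of length `k`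
(all other entries empty), then `Grid(M)` contains a permutation of grid-width ≥ k/4. -/
theorem exists_large_gridwidth_of_path {k₀ l₀ k : ℕ} (M : Fin k₀ → Fin l₀ → Option Bool)
    (u v : Fin k₀ × Fin l₀) (w : (monCellGraph M).Walk u v)
    (hpath : w.IsPath) (hlen : w.length = k)
    (hsupp : ∀ p : Fin k₀ × Fin l₀, (M p.1 p.2).isSome → p ∈ w.support)
    (hedges : ∀ e ∈ (monCellGraph M).edgeSet, e ∈ w.edges) :
    ∃ (n : ℕ) (π : Equiv.Perm (Fin n)), MonGriddable M π ∧ k ≤ 4 * gw π := by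
  classical
  rcases Nat.eq_zero_or_pos k with rfl | hk
  · refine ⟨0, 1, ⟨Fin.elim0, Fin.elim0, ?_, ?_, ?_, ?_⟩, by omega⟩
    · intro a b _
      exact a.elim0
    · intro a b _
      exact a.elim0
    · intro i
      exact i.elim0
    · intro i
      exact i.elim0
  · set cv : ℕ → Fin k₀ × Fin l₀ := fun t => w.getVert t with hcv
    have hinj : ∀ t1, t1 ≤ k → ∀ t2, t2 ≤ k → cv t1 = cv t2 → t1 = t2 := by
      intro t1 h1 t2 h2 h
      exact PPMProof.getVert_injOn w hpath t1 t2 (by omega) (by omega) h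
    have hadjt : ∀ t, t < k → (monCellGraph M).Adj (cv t) (cv (t+1)) := by
      intro t ht
      exact w.adj_getVert_succ (by omega)
    have hsome : ∀ t, t ≤ k → (M (cv t).1 (cv t).2).isSome := by
      intro t ht
      rcases Nat.lt_or_ge t k with h | h
      · have h2 := hadjt t h
        rw [monCellGraph, SimpleGraph.fromRel_adj] at h2
        rcases h2.2 with hrel | hrel
        · exact hrel.1
        · exact hrel.2.1
      · have htk : t = k := by omega
        rw [htk]
        have h2 := hadjt (k-1) (by omega)
        rw [monCellGraph, SimpleGraph.fromRel_adj] at h2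
        have hke : k - 1 + 1 = k := by omega
        rw [hke] at h2
        rcases h2.2 with hrel | hrel
        · exact hrel.2.1
        · exact hrel.1
    have hshare : ∀ t, t < k → (cv t).1 = (cv (t+1)).1 ∨ (cv t).2 = (cv (t+1)).2 := by
      intro t ht
      have h2 := hadjt t ht
      rw [monCellGraph, SimpleGraph.fromRel_adj] at h2
      rcases h2.2 with hrel | hrel
      · rcases hrel.2.2 with ⟨h, _⟩ | ⟨h, _⟩
        · exact Or.inl h
        · exact Or.inr h
      · rcases hrel.2.2 with ⟨h, _⟩ | ⟨h, _⟩
        · exact Or.inl h.symm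
        · exact Or.inr h.symm
    have hconsec : ∀ a b : Fin k₀ × Fin l₀, (monCellGraph M).Adj a b →
        ∃ i, i < k ∧ ((cv i = a ∧ cv (i+1) = b) ∨ (cv i = b ∧ cv (i+1) = a)) := by
      intro a b hadj
      have he : s(a,b) ∈ w.edges := hedges _ ((SimpleGraph.mem_edgeSet (monCellGraph M)).mpr hadj)
      obtain ⟨i, hi, ho⟩ := PPMProof.edge_loc w he
      exact ⟨i, by omega, ho⟩
    have hcellne : ∀ t, t < k → cv t ≠ cv (t+1) := by
      intro t ht h
      have := hinj t (by omega) (t+1) (by omega) h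
      omega
    -- column interval property
    have hcolint : ∀ d : ℕ, ∀ t1 t3, t1 ≤ k → t3 ≤ k →
        Nat.dist (cv t1).2.val (cv t3).2.val = d → (cv t1).1 = (cv t3).1 →
        ∀ t2, t1 ≤ t2 → t2 ≤ t3 → (cv t2).1 = (cv t1).1 := by
      intro d
      induction d using Nat.strong_induction_on with
      | _ d IH =>
      intro t1 t3 h1 h3 hd hcol t2 h12 h23
      by_cases heq : t1 = t3
      · have ht2 : t2 = t1 := by omega
        rw [ht2]
      · have hne : cv t1 ≠ cv t3 := fun h => heq (hinj t1 h1 t3 h3 h)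
        have hrne : (cv t1).2 ≠ (cv t3).2 := fun h => hne (Prod.ext hcol h)
        by_cases hex : ∃ s, s ≤ k ∧ (cv s).1 = (cv t1).1 ∧
            (((cv t1).2 < (cv s).2 ∧ (cv s).2 < (cv t3).2) ∨
             ((cv t3).2 < (cv s).2 ∧ (cv s).2 < (cv t1).2))
        · obtain ⟨s, hsk, hscol, hsbet⟩ := hex
          have hda : Nat.dist (cv t1).2.val (cv s).2.val < d := by
            rcases hsbet with ⟨ha, hb⟩ | ⟨ha, hb⟩ <;>
            · have ha' := Fin.lt_def.mp ha
              have hb' := Fin.lt_def.mp hb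
              simp only [Nat.dist] at hd ⊢
              omega
          have hdb : Nat.dist (cv s).2.val (cv t3).2.val < d := by
            rcases hsbet with ⟨ha, hb⟩ | ⟨ha, hb⟩ <;>
            · have ha' := Fin.lt_def.mp ha
              have hb' := Fin.lt_def.mp hb
              simp only [Nat.dist] at hd ⊢
              omega
          have hscol3 : (cv s).1 = (cv t3).1 := by rw [hscol, hcol]
          rcases Nat.le_total s t1 with hst | hst
          · have hr := IH _ hdb s t3 hsk h3 rfl hscol3 t2 (by omega) h23
            rw [hr, hscol]
          · rcases Nat.le_total t2 s with hts | hts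
            · exact IH _ hda t1 s h1 hsk rfl hscol.symm t2 h12 hts
            · have hr := IH _ hdb s t3 hsk h3 rfl hscol3 t2 hts h23
              rw [hr, hscol]
        · have hadj2 : (monCellGraph M).Adj (cv t1) (cv t3) := by
            rw [monCellGraph, SimpleGraph.fromRel_adj]
            refine ⟨hne, Or.inl ⟨hsome t1 h1, hsome t3 h3, Or.inl ⟨hcol, hrne, ?_⟩⟩⟩
            intro jj hjj
            by_contra hcell
            have hsup2 : ((cv t1).1, jj) ∈ w.support := by
              apply hsupp
              simpa using Option.ne_none_iff_isSome.mp hcell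
            rw [SimpleGraph.Walk.mem_support_iff_exists_getVert] at hsup2
            obtain ⟨s, hsv, hsl⟩ := hsup2
            have hcs : cv s = ((cv t1).1, jj) := hsv
            have hsl' : s ≤ k := by omega
            have h1s : (cv s).1 = (cv t1).1 := by rw [hcs]
            have h2s : (cv s).2 = jj := by rw [hcs]
            exact hex ⟨s, hsl', h1s, by rw [h2s]; exact hjj⟩
          obtain ⟨i, hik, hio⟩ := hconsec _ _ hadj2
          rcases hio with ⟨hia, hib⟩ | ⟨hia, hib⟩
          · have e1 : t1 = i := hinj t1 h1 i (by omega) hia.symm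
            have e2 : t3 = i+1 := hinj t3 h3 (i+1) (by omega) hib.symm
            have ht2 : t2 = t1 ∨ t2 = t3 := by omega
            rcases ht2 with h' | h'
            · rw [h']
            · rw [h']
              exact hcol.symm
          · have e1 : t1 = i+1 := hinj t1 h1 (i+1) (by omega) hib.symm
            have e2 : t3 = i := hinj t3 h3 i (by omega) hia.symm
            omega
    -- row interval property
    have hrowint : ∀ d : ℕ, ∀ t1 t3, t1 ≤ k → t3 ≤ k →
        Nat.dist (cv t1).1.val (cv t3).1.val = d → (cv t1).2 = (cv t3).2 →
        ∀ t2, t1 ≤ t2 → t2 ≤ t3 → (cv t2).2 = (cv t1).2 := by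
      intro d
      induction d using Nat.strong_induction_on with
      | _ d IH =>
      intro t1 t3 h1 h3 hd hrow t2 h12 h23
      by_cases heq : t1 = t3
      · have ht2 : t2 = t1 := by omega
        rw [ht2]
      · have hne : cv t1 ≠ cv t3 := fun h => heq (hinj t1 h1 t3 h3 h)
        have hcne : (cv t1).1 ≠ (cv t3).1 := fun h => hne (Prod.ext h hrow)
        by_cases hex : ∃ s, s ≤ k ∧ (cv s).2 = (cv t1).2 ∧
            (((cv t1).1 < (cv s).1 ∧ (cv s).1 < (cv t3).1) ∨
             ((cv t3).1 < (cv s).1 ∧ (cv s).1 < (cv t1).1))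
        · obtain ⟨s, hsk, hsrow, hsbet⟩ := hex
          have hda : Nat.dist (cv t1).1.val (cv s).1.val < d := by
            rcases hsbet with ⟨ha, hb⟩ | ⟨ha, hb⟩ <;>
            · have ha' := Fin.lt_def.mp ha
              have hb' := Fin.lt_def.mp hb
              simp only [Nat.dist] at hd ⊢
              omega
          have hdb : Nat.dist (cv s).1.val (cv t3).1.val < d := by
            rcases hsbet with ⟨ha, hb⟩ | ⟨ha, hb⟩ <;>
            · have ha' := Fin.lt_def.mp ha
              have hb' := Fin.lt_def.mp hb
              simp only [Nat.dist] at hd ⊢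
              omega
          have hsrow3 : (cv s).2 = (cv t3).2 := by rw [hsrow, hrow]
          rcases Nat.le_total s t1 with hst | hst
          · have hr := IH _ hdb s t3 hsk h3 rfl hsrow3 t2 (by omega) h23
            rw [hr, hsrow]
          · rcases Nat.le_total t2 s with hts | hts
            · exact IH _ hda t1 s h1 hsk rfl hsrow.symm t2 h12 hts
            · have hr := IH _ hdb s t3 hsk h3 rfl hsrow3 t2 hts h23
              rw [hr, hsrow]
        · have hadj2 : (monCellGraph M).Adj (cv t1) (cv t3) := by
            rw [monCellGraph, SimpleGraph.fromRel_adj]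
            refine ⟨hne, Or.inl ⟨hsome t1 h1, hsome t3 h3, Or.inr ⟨hrow, hcne, ?_⟩⟩⟩
            intro ii hii
            by_contra hcell
            have hsup2 : (ii, (cv t1).2) ∈ w.support := by
              apply hsupp
              simpa using Option.ne_none_iff_isSome.mp hcell
            rw [SimpleGraph.Walk.mem_support_iff_exists_getVert] at hsup2
            obtain ⟨s, hsv, hsl⟩ := hsup2
            have hcs : cv s = (ii, (cv t1).2) := hsv
            have hsl' : s ≤ k := by omega
            have h2s : (cv s).2 = (cv t1).2 := by rw [hcs]
            have h1s : (cv s).1 = ii := by rw [hcs]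
            exact hex ⟨s, hsl', h2s, by rw [h1s]; exact hii⟩
          obtain ⟨i, hik, hio⟩ := hconsec _ _ hadj2
          rcases hio with ⟨hia, hib⟩ | ⟨hia, hib⟩
          · have e1 : t1 = i := hinj t1 h1 i (by omega) hia.symm
            have e2 : t3 = i+1 := hinj t3 h3 (i+1) (by omega) hib.symm
            have ht2 : t2 = t1 ∨ t2 = t3 := by omega
            rcases ht2 with h' | h'
            · rw [h']
            · rw [h']
              exact hrow.symm
          · have e1 : t1 = i+1 := hinj t1 h1 (i+1) (by omega) hib.symm
            have e2 : t3 = i := hinj t3 h3 i (by omega) hia.symm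
            omega
    -- counting rows + columns
    set R := (Finset.range k).filter (fun t => (cv t).2 = (cv (t+1)).2) with hR
    set C := (Finset.range k).filter (fun t => (cv t).1 = (cv (t+1)).1) with hC
    have hRC : R.card + C.card = k := by
      have hsplit : C = (Finset.range k).filter (fun t => ¬ ((cv t).2 = (cv (t+1)).2)) := by
        ext t
        simp only [hC, Finset.mem_filter, Finset.mem_range]
        constructor
        · rintro ⟨ht, hc⟩
          exact ⟨ht, fun hr => hcellne t ht (Prod.ext hc hr)⟩
        · rintro ⟨ht, hrne⟩
          refine ⟨ht, ?_⟩
          rcases hshare t ht with h | h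
          · exact h
          · exact absurd h hrne
      rw [hR, hsplit]
      rw [Finset.card_filter_add_card_filter_not, Finset.card_range]
    have hcolcard : R.card + 1 ≤ ((Finset.range (k+1)).image (fun t => (cv t).1)).card := by
      have hmemR : ∀ t ∈ R, t < k ∧ (cv t).2 = (cv (t+1)).2 := by
        intro t ht
        rw [hR, Finset.mem_filter, Finset.mem_range] at ht
        exact ht
      have hcolne : ∀ t ∈ R, (cv t).1 ≠ (cv (t+1)).1 := by
        intro t ht h
        obtain ⟨h1, h2⟩ := hmemR t ht
        exact hcellne t h1 (Prod.ext h h2)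
      have key : ∀ t ∈ R, ∀ t' ∈ R, t < t' → (cv (t+1)).1 ≠ (cv (t'+1)).1 := by
        intro t ht t' ht' hlt hEq
        obtain ⟨h1, _⟩ := hmemR t ht
        obtain ⟨h1', _⟩ := hmemR t' ht'
        have hmid := hcolint _ (t+1) (t'+1) (by omega) (by omega) rfl hEq t'
          (by omega) (by omega)
        exact hcolne t' ht' (by rw [hmid, hEq])
      have key0 : ∀ t ∈ R, (cv (t+1)).1 ≠ (cv 0).1 := by
        intro t ht hEq
        obtain ⟨h1, _⟩ := hmemR t ht
        have hmid := hcolint _ 0 (t+1) (by omega) (by omega) rfl hEq.symm t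
          (by omega) (by omega)
        exact hcolne t ht (by rw [hmid, ← hEq])
      have hinjR : Set.InjOn (fun t => (cv (t+1)).1) (R : Set ℕ) := by
        intro t ht t' ht' hEq
        by_contra hne2
        rcases lt_or_gt_of_ne hne2 with hlt | hlt
        · exact key t ht t' ht' hlt hEq
        · exact key t' ht' t ht hlt hEq.symm
      have hnotmem : (cv 0).1 ∉ R.image (fun t => (cv (t+1)).1) := by
        intro hmem
        rw [Finset.mem_image] at hmem
        obtain ⟨t, ht, hEq⟩ := hmem
        exact key0 t ht hEq
      have hsub : insert (cv 0).1 (R.image (fun t => (cv (t+1)).1))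
          ⊆ (Finset.range (k+1)).image (fun t => (cv t).1) := by
        intro x hx
        rw [Finset.mem_insert] at hx
        rcases hx with rfl | hx
        · exact Finset.mem_image.mpr ⟨0, Finset.mem_range.mpr (by omega), rfl⟩
        · rw [Finset.mem_image] at hx
          obtain ⟨t, htR, rfl⟩ := hx
          obtain ⟨h1, _⟩ := hmemR t htR
          exact Finset.mem_image.mpr ⟨t+1, Finset.mem_range.mpr (by omega), rfl⟩
      calc R.card + 1 = (insert (cv 0).1 (R.image (fun t => (cv (t+1)).1))).card := by
            rw [Finset.card_insert_of_notMem hnotmem, Finset.card_image_of_injOn hinjR]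
        _ ≤ _ := Finset.card_le_card hsub
    have hrowcard : C.card + 1 ≤ ((Finset.range (k+1)).image (fun t => (cv t).2)).card := by
      have hmemC : ∀ t ∈ C, t < k ∧ (cv t).1 = (cv (t+1)).1 := by
        intro t ht
        rw [hC, Finset.mem_filter, Finset.mem_range] at ht
        exact ht
      have hrowne : ∀ t ∈ C, (cv t).2 ≠ (cv (t+1)).2 := by
        intro t ht h
        obtain ⟨h1, h2⟩ := hmemC t ht
        exact hcellne t h1 (Prod.ext h2 h)
      have key : ∀ t ∈ C, ∀ t' ∈ C, t < t' → (cv (t+1)).2 ≠ (cv (t'+1)).2 := by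
        intro t ht t' ht' hlt hEq
        obtain ⟨h1, _⟩ := hmemC t ht
        obtain ⟨h1', _⟩ := hmemC t' ht'
        have hmid := hrowint _ (t+1) (t'+1) (by omega) (by omega) rfl hEq t'
          (by omega) (by omega)
        exact hrowne t' ht' (by rw [hmid, hEq])
      have key0 : ∀ t ∈ C, (cv (t+1)).2 ≠ (cv 0).2 := by
        intro t ht hEq
        obtain ⟨h1, _⟩ := hmemC t ht
        have hmid := hrowint _ 0 (t+1) (by omega) (by omega) rfl hEq.symm t
          (by omega) (by omega)
        exact hrowne t ht (by rw [hmid, ← hEq])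
      have hinjC : Set.InjOn (fun t => (cv (t+1)).2) (C : Set ℕ) := by
        intro t ht t' ht' hEq
        by_contra hne2
        rcases lt_or_gt_of_ne hne2 with hlt | hlt
        · exact key t ht t' ht' hlt hEq
        · exact key t' ht' t ht hlt hEq.symm
      have hnotmem : (cv 0).2 ∉ C.image (fun t => (cv (t+1)).2) := by
        intro hmem
        rw [Finset.mem_image] at hmem
        obtain ⟨t, ht, hEq⟩ := hmem
        exact key0 t ht hEq
      have hsub : insert (cv 0).2 (C.image (fun t => (cv (t+1)).2))
          ⊆ (Finset.range (k+1)).image (fun t => (cv t).2) := by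
        intro x hx
        rw [Finset.mem_insert] at hx
        rcases hx with rfl | hx
        · exact Finset.mem_image.mpr ⟨0, Finset.mem_range.mpr (by omega), rfl⟩
        · rw [Finset.mem_image] at hx
          obtain ⟨t, htC, rfl⟩ := hx
          obtain ⟨h1, _⟩ := hmemC t htC
          exact Finset.mem_image.mpr ⟨t+1, Finset.mem_range.mpr (by omega), rfl⟩
      calc C.card + 1 = (insert (cv 0).2 (C.image (fun t => (cv (t+1)).2))).card := by
            rw [Finset.card_insert_of_notMem hnotmem, Finset.card_image_of_injOn hinjC]
        _ ≤ _ := Finset.card_le_card hsub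
    -- assemble the path data
    set P : PPMProof.PathData k₀ l₀ := ⟨k, fun t => (cv t).1, fun t => (cv t).2,
      fun t => (M (cv t).1 (cv t).2).getD true⟩ with hP
    have H1 : ∀ t₁, t₁ ≤ P.k → ∀ t₂, t₂ ≤ P.k →
        P.col t₁ = P.col t₂ → P.row t₁ = P.row t₂ → t₁ = t₂ := by
      intro t1 h1 t2 h2 hc hr
      exact hinj t1 h1 t2 h2 (Prod.ext hc hr)
    have Hsg : ∀ t, t ≤ P.k → M (P.col t) (P.row t) = some (P.sg t) := by
      intro t ht
      obtain ⟨bb, hbb⟩ := Option.isSome_iff_exists.mp (hsome t ht)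
      show M (cv t).1 (cv t).2 = some ((M (cv t).1 (cv t).2).getD true)
      rw [hbb]
      rfl
    have H2 : ∀ t, t < P.k → P.col t = P.col (t+1) ∨ P.row t = P.row (t+1) := hshare
    have H4 : P.k + 2 ≤ ((Finset.range (P.k+1)).image P.col).card
        + ((Finset.range (P.k+1)).image P.row).card := by
      show k + 2 ≤ ((Finset.range (k+1)).image (fun t => (cv t).1)).card
        + ((Finset.range (k+1)).image (fun t => (cv t).2)).card
      omega
    refine ⟨P.N, P.perm, PPMProof.mon_griddable M P H1 Hsg, ?_⟩
    apply PPMProof.le_gw_of_forall P.perm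
    · show 0 < (P.k+1)*(3*P.k+3)
      positivity
    · intro T hT
      exact PPMProof.gw_bound P hk H2 H4 T hT
end
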